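/- arXiv:2409.18914 — 2 statements merged into one kernel-verified Lean document; each statement's English description precedes it below -/
import Mathlib

section
/- Let G be a countable discrete group, (X,d) a G-system with diameter ρ, and {F_n} a Følner sequence in G. Let ζ ∈ A[0,ρ] satisfy k(ζ) := k_m(ζ) = k_M(ζ) > 0, and set ζ_d(x,y) = ζ(d(x,y)). Then overline{mdim}_M(X,G,d) = k(ζ) · overline{mdim}_M(X,G,ζ_d) and underline{mdim}_M(X,G,d) = k(ζ) · underline{mdim}_M(X,G,ζ_d). -/
open Filter Set Topology
open scoped ENNReal

namespace MeanDim18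

/-- `d` is a metric on `X`. -/
def IsMetricOn {X : Type*} (d : X → X → ℝ) : Prop :=
  (∀ x y, 0 ≤ d x y) ∧ (∀ x y, d x y = 0 ↔ x = y) ∧
    (∀ x y, d x y = d y x) ∧ ∀ x y z, d x z ≤ d x y + d y z

/-- `d` induces the given topology on `X`. -/
def InducesTopology {X : Type*} [TopologicalSpace X] (d : X → X → ℝ) : Prop :=
  ∀ (x : X) (s : Set X), s ∈ 𝓝 x ↔ ∃ ε > 0, {y : X | d x y < ε} ⊆ s

/-- `T` is a continuous (left) action of `G` on `X`. -/
def IsContAction {G X : Type*} [Group G] [TopologicalSpace X] (T : G → X → X) : Prop :=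
  (∀ x : X, T 1 x = x) ∧ (∀ g h : G, ∀ x : X, T (g * h) x = T g (T h x)) ∧
    ∀ g : G, Continuous (T g)

/-- The dynamical (Bowen) metric `d_F(x,y) = max_{g ∈ F} d(gx, gy)`. -/
noncomputable def dynDist {G X : Type*} (T : G → X → X) (d : X → X → ℝ)
    (F : Finset G) (x y : X) : ℝ :=
  if h : F.Nonempty then F.sup' h (fun g => d (T g x) (T g y)) else 0

/-- `K` is an `(F,ε)`-spanning subset of `E`. -/
def IsSpanningSet {G X : Type*} (T : G → X → X) (d : X → X → ℝ)
    (F : Finset G) (ε : ℝ) (E : Set X) (K : Finset X) : Prop :=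
  ↑K ⊆ E ∧ ∀ x ∈ E, ∃ y ∈ K, dynDist T d F x y ≤ ε

/-- `r_F(d,ε,E)`: minimal cardinality of an `(F,ε)`-spanning subset of `E`. -/
noncomputable def spanNum {G X : Type*} (T : G → X → X) (d : X → X → ℝ)
    (F : Finset G) (ε : ℝ) (E : Set X) : ℕ :=
  sInf {n : ℕ | ∃ K : Finset X, IsSpanningSet T d F ε E K ∧ K.card = n}

/-- The max-metric on the product. -/
def prodDist {X Y : Type*} (dX : X → X → ℝ) (dY : Y → Y → ℝ) (p q : X × Y) : ℝ :=
  max (dX p.1 q.1) (dY p.2 q.2)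

/-- The diagonal action on the product. -/
def prodAction {G X Y : Type*} (T : G → X → X) (S : G → Y → Y) (g : G) (p : X × Y) : X × Y :=
  (T g p.1, S g p.2)

/-- `{F n}` is a Følner sequence of nonempty finite subsets of `G`. -/
def IsFolner {G : Type*} [Group G] (Fs : ℕ → Finset G) : Prop :=
  letI := Classical.decEq G
  (∀ n, (Fs n).Nonempty) ∧
    ∀ g : G, Tendsto
      (fun n => (((Fs n) \ (Fs n).image (fun h => g * h)).card : ℝ) / ((Fs n).card : ℝ))
      atTop (𝓝 0)

/-- Upper metric mean dimension (via spanning numbers), w.r.t. a Følner sequence. -/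
noncomputable def mdimMUpper {G X : Type*} (T : G → X → X) (d : X → X → ℝ)
    (Fs : ℕ → Finset G) (E : Set X) : ℝ≥0∞ :=
  limsup (fun ε : ℝ =>
      (limsup (fun n =>
          ENNReal.ofReal (Real.log (spanNum T d (Fs n) ε E : ℝ) / ((Fs n).card : ℝ))) atTop)
        / ENNReal.ofReal |Real.log ε|) (𝓝[>] (0 : ℝ))

/-- Lower metric mean dimension (via spanning numbers), w.r.t. a Følner sequence. -/
noncomputable def mdimMLower {G X : Type*} (T : G → X → X) (d : X → X → ℝ)
    (Fs : ℕ → Finset G) (E : Set X) : ℝ≥0∞ :=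
  liminf (fun ε : ℝ =>
      (limsup (fun n =>
          ENNReal.ofReal (Real.log (spanNum T d (Fs n) ε E : ℝ) / ((Fs n).card : ℝ))) atTop)
        / ENNReal.ofReal |Real.log ε|) (𝓝[>] (0 : ℝ))


/-- Diameter of a set with respect to an abstract metric `d` (with `diam ∅ = 0`). -/
noncomputable def setDiam {X : Type*} (d : X → X → ℝ) (A : Set X) : ℝ :=
  sSup {r : ℝ | ∃ x ∈ A, ∃ y ∈ A, r = d x y}

/-- `ζ ∈ A[0,ρ]`: continuous, increasing, subadditive on `[0,ρ]`, nonnegative,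
and vanishing exactly at `0`. -/
def MemA (ρ : ℝ) (ζ : ℝ → ℝ) : Prop :=
  ContinuousOn ζ (Set.Icc 0 ρ) ∧ MonotoneOn ζ (Set.Icc 0 ρ) ∧
    (∀ x ∈ Set.Icc 0 ρ, 0 ≤ ζ x) ∧
    (∀ x ∈ Set.Icc 0 ρ, ∀ y ∈ Set.Icc 0 ρ, x + y ∈ Set.Icc 0 ρ → ζ (x + y) ≤ ζ x + ζ y) ∧
    ∀ x ∈ Set.Icc 0 ρ, (ζ x = 0 ↔ x = 0)

/-- `k_m(ζ) = liminf_{ε→0⁺} log ζ(ε) / log ε`. -/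
noncomputable def km (ζ : ℝ → ℝ) : ℝ :=
  liminf (fun ε : ℝ => Real.log (ζ ε) / Real.log ε) (𝓝[>] (0 : ℝ))

/-- `k_M(ζ) = limsup_{ε→0⁺} log ζ(ε) / log ε`. -/
noncomputable def kM (ζ : ℝ → ℝ) : ℝ :=
  limsup (fun ε : ℝ => Real.log (ζ ε) / Real.log ε) (𝓝[>] (0 : ℝ))

/-! ### Auxiliary lemmas -/

section Aux

set_option linter.unusedSectionVars false

variable {G X : Type*} [Group G] [TopologicalSpace X] [CompactSpace X]
  {T : G → X → X} {d : X → X → ℝ} {ρ : ℝ} {ζ : ℝ → ℝ}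

lemma ball_open (hd : IsMetricOn d) (hc : InducesTopology d) (a : X) (c : ℝ) :
    IsOpen {y : X | d a y < c} := by
  rw [isOpen_iff_mem_nhds]
  intro y hy
  rw [hc y]
  refine ⟨c - d a y, by simpa using hy, fun z hz => ?_⟩
  simp only [mem_setOf_eq] at hz ⊢
  calc d a z ≤ d a y + d y z := hd.2.2.2 a y z
  _ < d a y + (c - d a y) := by linarith
  _ = c := by ring

lemma exists_bound (hd : IsMetricOn d) (hc : InducesTopology d) [Nonempty X] :
    ∃ C : ℝ, ∀ x y : X, d x y ≤ C := by
  obtain ⟨x₀⟩ := ‹Nonempty X›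
  have hcov : (univ : Set X) ⊆ ⋃ n : ℕ, {y : X | d x₀ y < n + 1} := by
    intro y _
    exact mem_iUnion.2 ⟨⌈d x₀ y⌉₊, by
      simp only [mem_setOf_eq]
      exact lt_of_le_of_lt (Nat.le_ceil _) (by linarith)⟩
  obtain ⟨t, ht⟩ := isCompact_univ.elim_finite_subcover _
    (fun n : ℕ => ball_open hd hc x₀ ((n : ℝ) + 1)) hcov
  classical
  set N : ℕ := t.sup id with hN
  refine ⟨2 * ((N : ℝ) + 1), fun x y => ?_⟩
  have hb : ∀ z : X, d x₀ z ≤ (N : ℝ) + 1 := by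
    intro z
    obtain ⟨n, hn, hz⟩ := by simpa using ht (mem_univ z)
    have : (n : ℝ) ≤ N := by exact_mod_cast Finset.le_sup (f := id) hn
    exact le_trans hz.le (by linarith)
  calc d x y ≤ d x x₀ + d x₀ y := hd.2.2.2 _ _ _
  _ = d x₀ x + d x₀ y := by rw [hd.2.2.1]
  _ ≤ 2 * ((N : ℝ) + 1) := by have := hb x; have := hb y; linarith

lemma dynDist_le_iff {F : Finset G} (hF : F.Nonempty) {x y : X} {c : ℝ} :
    dynDist T d F x y ≤ c ↔ ∀ g ∈ F, d (T g x) (T g y) ≤ c := by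
  unfold dynDist
  rw [dif_pos hF, Finset.sup'_le_iff]

lemma exists_spanning (hT : IsContAction T) (hd : IsMetricOn d) (hc : InducesTopology d)
    (F : Finset G) (hF : F.Nonempty) {ε : ℝ} (hε : 0 < ε) :
    ∃ K : Finset X, IsSpanningSet T d F ε (univ : Set X) K := by
  classical
  have hopen : ∀ x : X, IsOpen {y : X | ∀ g ∈ F, d (T g x) (T g y) < ε} := by
    intro x
    have : {y : X | ∀ g ∈ F, d (T g x) (T g y) < ε}
        = ⋂ g ∈ F, (T g) ⁻¹' {z : X | d (T g x) z < ε} := by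
      ext y; simp [mem_iInter]
    rw [this]
    exact isOpen_biInter_finset fun g _ =>
      (ball_open hd hc (T g x) ε).preimage (hT.2.2 g)
  have hcov : (univ : Set X) ⊆ ⋃ x : X, {y : X | ∀ g ∈ F, d (T g x) (T g y) < ε} := by
    intro y _
    exact mem_iUnion.2 ⟨y, fun g _ => by
      simpa [(hd.2.1 (T g y) (T g y)).mpr rfl] using hε⟩
  obtain ⟨t, ht⟩ := isCompact_univ.elim_finite_subcover _ hopen hcov
  refine ⟨t, subset_univ _, fun x _ => ?_⟩
  obtain ⟨y, hy, hxy⟩ := by simpa using ht (mem_univ x)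
  refine ⟨y, hy, (dynDist_le_iff hF).2 fun g hg => ?_⟩
  rw [hd.2.2.1]
  exact (hxy g hg).le

lemma spanNum_le {F : Finset G} {ε : ℝ} {E : Set X} {K : Finset X}
    (hK : IsSpanningSet T d F ε E K) : spanNum T d F ε E ≤ K.card :=
  Nat.sInf_le ⟨K, hK, rfl⟩

lemma spanNum_attained {F : Finset G} {ε : ℝ} {E : Set X}
    (h : ∃ K : Finset X, IsSpanningSet T d F ε E K) :
    ∃ K : Finset X, IsSpanningSet T d F ε E K ∧ K.card = spanNum T d F ε E := by
  obtain ⟨K, hK⟩ := h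
  exact Nat.sInf_mem (s := {n : ℕ | ∃ K : Finset X, IsSpanningSet T d F ε E K ∧ K.card = n})
    ⟨K.card, K, hK, rfl⟩

lemma one_le_card_spanning [Nonempty X] {F : Finset G} {ε : ℝ} {K : Finset X}
    (hK : IsSpanningSet T d F ε (univ : Set X) K) : 1 ≤ K.card := by
  obtain ⟨y, hy, -⟩ := hK.2 (Classical.arbitrary X) (mem_univ _)
  exact Finset.card_pos.2 ⟨y, hy⟩

lemma one_le_spanNum [Nonempty X] {F : Finset G} {ε : ℝ}
    (h : ∃ K : Finset X, IsSpanningSet T d F ε (univ : Set X) K) :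
    1 ≤ spanNum T d F ε (univ : Set X) := by
  obtain ⟨K, hK, hcard⟩ := spanNum_attained h
  exact hcard ▸ one_le_card_spanning hK

lemma zeta_zero (hρ0 : 0 ≤ ρ) (hζ : MemA ρ ζ) : ζ 0 = 0 :=
  (hζ.2.2.2.2 0 ⟨le_rfl, hρ0⟩).mpr rfl

lemma zeta_pos (hζ : MemA ρ ζ) {ε : ℝ} (hε : ε ∈ Ioc 0 ρ) : 0 < ζ ε := by
  have h1 : 0 ≤ ζ ε := hζ.2.2.1 ε ⟨hε.1.le, hε.2⟩
  have h2 : ζ ε ≠ 0 := fun h => hε.1.ne' ((hζ.2.2.2.2 ε ⟨hε.1.le, hε.2⟩).mp h)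
  exact lt_of_le_of_ne h1 (Ne.symm h2)

lemma d_mem_Icc (hd : IsMetricOn d) (hρb : ∀ x y : X, d x y ≤ ρ) (x y : X) :
    d x y ∈ Icc 0 ρ := ⟨hd.1 x y, hρb x y⟩

lemma exists_spanning_comp (hT : IsContAction T) (hd : IsMetricOn d) (hc : InducesTopology d)
    (hρb : ∀ x y : X, d x y ≤ ρ) (hρpos : 0 < ρ) (hζ : MemA ρ ζ)
    (F : Finset G) (hF : F.Nonempty) {δ : ℝ} (hδ : 0 < δ) :
    ∃ K : Finset X, IsSpanningSet T (fun x y => ζ (d x y)) F δ (univ : Set X) K := by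
  have hcont0 : Tendsto ζ (𝓝[Ioc 0 ρ] 0) (𝓝 0) := by
    have := ((hζ.1.continuousWithinAt (x := 0) ⟨le_rfl, hρpos.le⟩).mono
      Ioc_subset_Icc_self)
    rw [ContinuousWithinAt, zeta_zero hρpos.le hζ] at this
    exact this
  have hev : ∀ᶠ ε in 𝓝[Ioc 0 ρ] (0:ℝ), ζ ε < δ := by
    exact hcont0 (by rw [mem_nhds_iff]; exact ⟨Iio δ, fun x hx => hx, isOpen_Iio, hδ⟩)
  have hne : (𝓝[Ioc 0 ρ] (0:ℝ)).NeBot := by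
    rw [nhdsWithin_Ioc_eq_nhdsGT hρpos]; infer_instance
  obtain ⟨ε₀, hε₀δ, hε₀mem⟩ := (hev.and eventually_mem_nhdsWithin).exists
  obtain ⟨K, hK⟩ := exists_spanning hT hd hc F hF hε₀mem.1
  refine ⟨K, subset_univ _, fun x hx => ?_⟩
  obtain ⟨y, hy, hxy⟩ := hK.2 x hx
  refine ⟨y, hy, (dynDist_le_iff hF).2 fun g hg => ?_⟩
  have h1 : d (T g x) (T g y) ≤ ε₀ := (dynDist_le_iff hF).1 hxy g hg
  calc ζ (d (T g x) (T g y)) ≤ ζ ε₀ :=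
        hζ.2.1 (d_mem_Icc hd hρb _ _) ⟨hε₀mem.1.le, hε₀mem.2⟩ h1
  _ ≤ δ := hε₀δ.le

lemma comp_le_spanNum (hT : IsContAction T) (hd : IsMetricOn d) (hc : InducesTopology d)
    (hρb : ∀ x y : X, d x y ≤ ρ) (hζ : MemA ρ ζ)
    (F : Finset G) (hF : F.Nonempty) {ε : ℝ} (hε : ε ∈ Ioc 0 ρ) :
    spanNum T (fun x y => ζ (d x y)) F (ζ ε) (univ : Set X) ≤ spanNum T d F ε (univ : Set X) := by
  obtain ⟨K, hK, hcard⟩ := spanNum_attained (exists_spanning hT hd hc F hF hε.1)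
  rw [← hcard]
  apply spanNum_le
  refine ⟨subset_univ _, fun x hx => ?_⟩
  obtain ⟨y, hy, hxy⟩ := hK.2 x hx
  refine ⟨y, hy, (dynDist_le_iff hF).2 fun g hg => ?_⟩
  exact hζ.2.1 (d_mem_Icc hd hρb _ _) ⟨hε.1.le, hε.2⟩ ((dynDist_le_iff hF).1 hxy g hg)

lemma comp_ge_spanNum (hT : IsContAction T) (hd : IsMetricOn d) (hc : InducesTopology d)
    (hρb : ∀ x y : X, d x y ≤ ρ) (hρpos : 0 < ρ) (hζ : MemA ρ ζ)
    (F : Finset G) (hF : F.Nonempty) {ε δ : ℝ} (hε : ε ∈ Ioc 0 ρ) (hδ : δ ∈ Ioo 0 (ζ ε)) :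
    spanNum T d F ε (univ : Set X) ≤
      spanNum T (fun x y => ζ (d x y)) F δ (univ : Set X) := by
  obtain ⟨K, hK, hcard⟩ := spanNum_attained
    (exists_spanning_comp hT hd hc hρb hρpos hζ F hF hδ.1)
  rw [← hcard]
  apply spanNum_le
  refine ⟨subset_univ _, fun x hx => ?_⟩
  obtain ⟨y, hy, hxy⟩ := hK.2 x hx
  refine ⟨y, hy, (dynDist_le_iff hF).2 fun g hg => ?_⟩
  have h1 : ζ (d (T g x) (T g y)) ≤ δ := (dynDist_le_iff hF).1 hxy g hg
  by_contra hcon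
  push_neg at hcon
  have : ζ ε ≤ ζ (d (T g x) (T g y)) :=
    hζ.2.1 ⟨hε.1.le, hε.2⟩ (d_mem_Icc hd hρb _ _) hcon.le
  linarith [hδ.2]

lemma map_nhdsGT (hρpos : 0 < ρ) {θ : ℝ → ℝ} (hθc : ContinuousOn θ (Icc 0 ρ))
    (hθ0 : θ 0 = 0) (hθpos : ∀ x ∈ Ioc 0 ρ, 0 < θ x) :
    Filter.map θ (𝓝[>] (0 : ℝ)) = 𝓝[>] (0 : ℝ) := by
  apply le_antisymm
  · have h1 : Tendsto θ (𝓝[Ioc 0 ρ] 0) (𝓝 0) := by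
      have := (hθc.continuousWithinAt (x := 0) ⟨le_rfl, hρpos.le⟩).mono Ioc_subset_Icc_self
      rw [ContinuousWithinAt, hθ0] at this
      exact this
    have key : Tendsto θ (𝓝[Ioc 0 ρ] 0) (𝓝[>] 0) := by
      rw [tendsto_nhdsWithin_iff]
      exact ⟨h1, eventually_mem_nhdsWithin.mono fun x hx => hθpos x hx⟩
    calc Filter.map θ (𝓝[>] (0:ℝ)) = Filter.map θ (𝓝[Ioc 0 ρ] 0) := by
          rw [nhdsWithin_Ioc_eq_nhdsGT hρpos]
    _ ≤ 𝓝[>] (0:ℝ) := key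
  · rw [Filter.le_def]
    intro s hs
    rw [Filter.mem_map] at hs
    rw [mem_nhdsGT_iff_exists_Ioc_subset] at hs
    obtain ⟨b, hb, hbs⟩ := hs
    rw [mem_Ioi] at hb
    set b' : ℝ := min b ρ with hb'
    have hb'pos : 0 < b' := lt_min hb hρpos
    have hb'ρ : b' ≤ ρ := min_le_right _ _
    have hsub : Ioc 0 b' ⊆ θ ⁻¹' s := fun x hx => hbs ⟨hx.1, hx.2.trans (min_le_left _ _)⟩
    have hIV : Ioc (θ 0) (θ b') ⊆ θ '' Ioc 0 b' :=
      intermediate_value_Ioc hb'pos.le (hθc.mono (Icc_subset_Icc le_rfl hb'ρ))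
    refine mem_of_superset (Ioc_mem_nhdsGT_of_mem
      (⟨le_rfl, hθpos b' ⟨hb'pos, hb'ρ⟩⟩ : (0:ℝ) ∈ Ico 0 (θ b'))) ?_
    intro δ hδ
    have : δ ∈ θ '' Ioc 0 b' := hIV (by rw [hθ0]; exact hδ)
    obtain ⟨x, hx, hxδ⟩ := this
    have := hsub hx
    rw [mem_preimage, hxδ] at this
    exact this

lemma liminf_const_mul_of_ne_top' {α : Type*} {f : Filter α} {u : α → ℝ≥0∞} {a : ℝ≥0∞}
    (ha_top : a ≠ ⊤) (ha0 : a ≠ 0) :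
    (f.liminf fun x : α => a * u x) = a * f.liminf u := by
  let g := fun x : ℝ≥0∞ => a * x
  have hg_bij : Function.Bijective g :=
    Function.bijective_iff_has_inverse.mpr
      ⟨fun x => a⁻¹ * x,
        ⟨fun x => by simp [g, ← mul_assoc, ENNReal.inv_mul_cancel ha0 ha_top], fun x => by
          simp [g, ← mul_assoc, ENNReal.mul_inv_cancel ha0 ha_top]⟩⟩
  have hg_mono : StrictMono g :=
    Monotone.strictMono_of_injective
      (fun _ _ _ => by rwa [ENNReal.mul_le_mul_iff_right ha0 ha_top]) hg_bij.1
  let g_iso := StrictMono.orderIsoOfSurjective g hg_mono hg_bij.2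
  exact (OrderIso.liminf_apply g_iso).symm

lemma squeeze_ennreal {A B : ℝ≥0∞} {k : ℝ} (hk : 0 < k)
    (h1 : ∀ η : ℝ, η ∈ Ioo 0 k → A ≤ ENNReal.ofReal (k + η) * B)
    (h2 : ∀ η : ℝ, η ∈ Ioo 0 k → ENNReal.ofReal (k - η) * B ≤ A) :
    A = ENNReal.ofReal k * B := by
  rcases eq_or_ne B ⊤ with hB | hB
  · have := h2 (k/2) ⟨by linarith, by linarith⟩
    rw [hB, ENNReal.mul_top (by simp [ENNReal.ofReal_eq_zero]; linarith)] at this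
    rw [hB, ENNReal.mul_top (by simp [ENNReal.ofReal_eq_zero]; linarith), top_le_iff.1 this]
  · have hcont : Tendsto (fun η : ℝ => ENNReal.ofReal (k + η) * B) (𝓝[>] 0)
        (𝓝 (ENNReal.ofReal k * B)) := by
      have h1' : Tendsto (fun η : ℝ => ENNReal.ofReal (k + η)) (𝓝[>] 0)
          (𝓝 (ENNReal.ofReal k)) := by
        apply Tendsto.mono_left _ nhdsWithin_le_nhds
        have : Tendsto (fun η : ℝ => k + η) (𝓝 0) (𝓝 k) := by
          simpa using (tendsto_const_nhds.add tendsto_id :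
            Tendsto (fun η : ℝ => k + η) (𝓝 0) (𝓝 (k + 0)))
        exact (ENNReal.continuous_ofReal.tendsto k).comp this
      exact ENNReal.Tendsto.mul_const h1' (Or.inr hB)
    have hcont2 : Tendsto (fun η : ℝ => ENNReal.ofReal (k - η) * B) (𝓝[>] 0)
        (𝓝 (ENNReal.ofReal k * B)) := by
      have h1' : Tendsto (fun η : ℝ => ENNReal.ofReal (k - η)) (𝓝[>] 0)
          (𝓝 (ENNReal.ofReal k)) := by
        apply Tendsto.mono_left _ nhdsWithin_le_nhds
        have : Tendsto (fun η : ℝ => k - η) (𝓝 0) (𝓝 k) := by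
          simpa using (tendsto_const_nhds.sub tendsto_id :
            Tendsto (fun η : ℝ => k - η) (𝓝 0) (𝓝 (k - 0)))
        exact (ENNReal.continuous_ofReal.tendsto k).comp this
      exact ENNReal.Tendsto.mul_const h1' (Or.inr hB)
    have hev : ∀ᶠ η : ℝ in 𝓝[>] 0, η ∈ Ioo 0 k :=
      Ioo_mem_nhdsGT_of_mem ⟨le_rfl, hk⟩
    apply le_antisymm
    · exact ge_of_tendsto hcont (hev.mono fun η hη => h1 η hη)
    · exact le_of_tendsto hcont2 (hev.mono fun η hη => h2 η hη)

lemma ennreal_mul_div_mul {x y : ℝ≥0∞} {c : ℝ≥0∞} (hc0 : c ≠ 0) (hct : c ≠ ⊤) :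
    c * (x / (c * y)) = x / y := by
  rw [div_eq_mul_inv, ENNReal.mul_inv (Or.inl hc0) (Or.inl hct), div_eq_mul_inv]
  calc c * (x * (c⁻¹ * y⁻¹)) = (c * c⁻¹) * (x * y⁻¹) := by ring
  _ = x * y⁻¹ := by rw [ENNReal.mul_inv_cancel hc0 hct, one_mul]

lemma ennreal_div_mul {x y c : ℝ≥0∞} (hc0 : c ≠ 0) (hct : c ≠ ⊤) :
    x / (c * y) = c⁻¹ * (x / y) := by
  rw [div_eq_mul_inv, ENNReal.mul_inv (Or.inl hc0) (Or.inl hct), div_eq_mul_inv]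
  ring

lemma inner_limsup_mono {a b : ℕ → ℕ} {c : ℕ → ℝ} (hc : ∀ n, 0 < c n)
    (h1 : ∀ n, 1 ≤ a n) (hab : ∀ n, a n ≤ b n) :
    limsup (fun n => ENNReal.ofReal (Real.log (a n) / c n)) atTop ≤
      limsup (fun n => ENNReal.ofReal (Real.log (b n) / c n)) atTop := by
  apply limsup_le_limsup (Eventually.of_forall fun n => ?_)
  apply ENNReal.ofReal_le_ofReal
  have hlog : Real.log (a n) ≤ Real.log (b n) :=
    Real.log_le_log (by exact_mod_cast h1 n) (by exact_mod_cast hab n)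
  exact div_le_div_of_nonneg_right hlog (hc n).le

end Aux

/-! ### Packaging the inner limsup -/

section Pack

set_option linter.unusedSectionVars false

variable {G X : Type*} [Group G] [TopologicalSpace X] [CompactSpace X]

/-- The inner limsup appearing in the metric mean dimension. -/
noncomputable def innerU (T : G → X → X) (d : X → X → ℝ) (Fs : ℕ → Finset G) (ε : ℝ) : ℝ≥0∞ :=
  limsup (fun n =>
    ENNReal.ofReal (Real.log (spanNum T d (Fs n) ε (univ : Set X) : ℝ) / ((Fs n).card : ℝ)))
    atTop

/-- The function whose limsup/liminf at `0⁺` is the metric mean dimension. -/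
noncomputable def gfun (T : G → X → X) (d : X → X → ℝ) (Fs : ℕ → Finset G) (ε : ℝ) : ℝ≥0∞ :=
  innerU T d Fs ε / ENNReal.ofReal |Real.log ε|

lemma mdimMUpper_eq (T : G → X → X) (d : X → X → ℝ) (Fs : ℕ → Finset G) :
    mdimMUpper T d Fs (univ : Set X) = limsup (gfun T d Fs) (𝓝[>] (0:ℝ)) := rfl

lemma mdimMLower_eq (T : G → X → X) (d : X → X → ℝ) (Fs : ℕ → Finset G) :
    mdimMLower T d Fs (univ : Set X) = liminf (gfun T d Fs) (𝓝[>] (0:ℝ)) := rfl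

lemma innerU_mono {T : G → X → X} {d₁ d₂ : X → X → ℝ} {Fs : ℕ → Finset G} {ε δ : ℝ}
    (hFs : ∀ n, (Fs n).Nonempty)
    (h1 : ∀ n, 1 ≤ spanNum T d₁ (Fs n) ε (univ : Set X))
    (hab : ∀ n, spanNum T d₁ (Fs n) ε (univ : Set X) ≤ spanNum T d₂ (Fs n) δ (univ : Set X)) :
    innerU T d₁ Fs ε ≤ innerU T d₂ Fs δ :=
  inner_limsup_mono (fun n => by exact_mod_cast Finset.card_pos.2 (hFs n)) h1 hab

end Pack

/-- if `k(ζ) := k_m(ζ) = k_M(ζ) > 0`, then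
`mdim_M(X,G,d) = k(ζ) · mdim_M(X,G,ζ∘d)` for both the upper and lower versions. -/
theorem mdimM_comp_eq {G X : Type*} [Group G] [Countable G]
    [TopologicalSpace X] [CompactSpace X]
    (T : G → X → X) (hT : IsContAction T)
    (d : X → X → ℝ) (hd : IsMetricOn d) (hc : InducesTopology d)
    (Fs : ℕ → Finset G) (hFol : IsFolner Fs)
    (ρ : ℝ) (hρ : ρ = setDiam d (Set.univ : Set X))
    (ζ : ℝ → ℝ) (hζ : MemA ρ ζ) (hk : km ζ = kM ζ) (hkpos : 0 < km ζ) :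
    mdimMUpper T d Fs (Set.univ : Set X)
        = ENNReal.ofReal (km ζ) * mdimMUpper T (fun x y => ζ (d x y)) Fs (Set.univ : Set X) ∧
    mdimMLower T d Fs (Set.univ : Set X)
        = ENNReal.ofReal (km ζ) * mdimMLower T (fun x y => ζ (d x y)) Fs (Set.univ : Set X) := by
  classical
  by_cases hsub : Subsingleton X
  · -- degenerate case: `X` has at most one point, all quantities vanish
    have hlog : ∀ (d' : X → X → ℝ) (F : Finset G) (ε : ℝ),
        Real.log ((spanNum T d' F ε (univ : Set X) : ℝ)) = 0 := by
      intro d' F ε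
      rcases eq_or_ne (spanNum T d' F ε (univ : Set X)) 0 with h | h
      · rw [h]; simp
      · have hne : {n : ℕ | ∃ K : Finset X,
            IsSpanningSet T d' F ε (univ : Set X) K ∧ K.card = n}.Nonempty := by
          by_contra h'
          rw [not_nonempty_iff_eq_empty] at h'
          exact h (by unfold spanNum; rw [h', Nat.sInf_empty])
        obtain ⟨K, hK, hcard⟩ := Nat.sInf_mem hne
        have hKle : K.card ≤ 1 := Finset.card_le_one.2 fun a _ b _ => Subsingleton.elim a b
        have hle : spanNum T d' F ε (univ : Set X) ≤ 1 := by
          rw [show spanNum T d' F ε (univ : Set X) = K.card from hcard.symm]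
          exact hKle
        have h1 : spanNum T d' F ε (univ : Set X) = 1 :=
          le_antisymm hle (Nat.one_le_iff_ne_zero.2 h)
        rw [h1]; simp
    have hzero : ∀ d' : X → X → ℝ,
        mdimMUpper T d' Fs (univ : Set X) = 0 ∧ mdimMLower T d' Fs (univ : Set X) = 0 := by
      intro d'
      have hfun : gfun T d' Fs = fun _ : ℝ => (0 : ℝ≥0∞) := by
        funext ε
        have h2 : (fun n : ℕ => ENNReal.ofReal
            (Real.log ((spanNum T d' (Fs n) ε (univ : Set X) : ℕ) : ℝ) / ((Fs n).card : ℝ)))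
            = fun _ : ℕ => (0 : ℝ≥0∞) := by
          funext n; rw [hlog]; simp
        show innerU T d' Fs ε / ENNReal.ofReal |Real.log ε| = 0
        unfold innerU
        rw [h2, limsup_const, ENNReal.zero_div]
      constructor
      · rw [mdimMUpper_eq, hfun, limsup_const]
      · rw [mdimMLower_eq, hfun, liminf_const]
    refine ⟨?_, ?_⟩
    · rw [(hzero d).1, (hzero (fun x y => ζ (d x y))).1, mul_zero]
    · rw [(hzero d).2, (hzero (fun x y => ζ (d x y))).2, mul_zero]
  · -- main case
    have hnt : Nontrivial X := not_subsingleton_iff_nontrivial.mp hsub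
    have hXne : Nonempty X := inferInstance
    obtain ⟨C, hC⟩ := exists_bound hd hc
    have hbdd : BddAbove {r : ℝ | ∃ x ∈ (univ : Set X), ∃ y ∈ (univ : Set X), r = d x y} :=
      ⟨C, by rintro r ⟨x, -, y, -, rfl⟩; exact hC x y⟩
    have hρb : ∀ x y : X, d x y ≤ ρ := by
      intro x y
      rw [hρ]
      exact le_csSup hbdd ⟨x, mem_univ x, y, mem_univ y, rfl⟩
    obtain ⟨x₁, y₁, hxy⟩ := exists_pair_ne X
    have hd1pos : 0 < d x₁ y₁ :=
      lt_of_le_of_ne (hd.1 x₁ y₁) (Ne.symm fun h => hxy ((hd.2.1 x₁ y₁).1 h))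
    have hρpos : 0 < ρ := lt_of_lt_of_le hd1pos (hρb x₁ y₁)
    have hlimsupf : limsup (fun ε => Real.log (ζ ε) / Real.log ε) (𝓝[>] (0:ℝ)) = km ζ := hk.symm
    have hliminff : liminf (fun ε => Real.log (ζ ε) / Real.log ε) (𝓝[>] (0:ℝ)) = km ζ := rfl
    -- boundedness of the log-ratio on the right neighborhood of 0
    have hbb : IsBoundedUnder (· ≤ ·) (𝓝[>] (0:ℝ)) (fun ε => Real.log (ζ ε) / Real.log ε) := by
      by_contra hb
      have h0 : {a : ℝ | ∀ᶠ ε in 𝓝[>] (0:ℝ), Real.log (ζ ε) / Real.log ε ≤ a} = ∅ :=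
        eq_empty_iff_forall_notMem.2 fun a ha => hb ⟨a, eventually_map.mpr ha⟩
      have h1 : limsup (fun ε => Real.log (ζ ε) / Real.log ε) (𝓝[>] (0:ℝ)) = 0 := by
        rw [limsup_eq, h0, Real.sInf_empty]
      rw [hlimsupf] at h1
      rw [h1] at hkpos
      exact lt_irrefl 0 hkpos
    have hbb2 : IsBoundedUnder (· ≥ ·) (𝓝[>] (0:ℝ)) (fun ε => Real.log (ζ ε) / Real.log ε) := by
      by_contra hb
      have h0 : {a : ℝ | ∀ᶠ ε in 𝓝[>] (0:ℝ), a ≤ Real.log (ζ ε) / Real.log ε} = ∅ :=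
        eq_empty_iff_forall_notMem.2 fun a ha => hb ⟨a, eventually_map.mpr ha⟩
      have h1 : liminf (fun ε => Real.log (ζ ε) / Real.log ε) (𝓝[>] (0:ℝ)) = 0 := by
        rw [liminf_eq, h0, Real.sSup_empty]
      rw [hliminff] at h1
      rw [h1] at hkpos
      exact lt_irrefl 0 hkpos
    -- change of variable filters
    have hmap1 : Filter.map ζ (𝓝[>] (0:ℝ)) = 𝓝[>] (0:ℝ) :=
      map_nhdsGT hρpos hζ.1 (zeta_zero hρpos.le hζ) (fun x hx => zeta_pos hζ hx)
    have hmap2 : Filter.map (fun ε => ζ ε / 2) (𝓝[>] (0:ℝ)) = 𝓝[>] (0:ℝ) :=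
      map_nhdsGT hρpos (hζ.1.div_const 2)
        (by rw [zeta_zero hρpos.le hζ]; norm_num)
        (fun x hx => half_pos (zeta_pos hζ hx))
    -- the key eventual inequalities
    have key : ∀ η : ℝ, η ∈ Ioo 0 (km ζ) →
        ∀ᶠ ε in 𝓝[>] (0:ℝ),
          gfun T d Fs ε ≤ ENNReal.ofReal (km ζ + η) * gfun T (fun x y => ζ (d x y)) Fs (ζ ε / 2) ∧
          gfun T (fun x y => ζ (d x y)) Fs (ζ ε) ≤
            (ENNReal.ofReal (km ζ - η))⁻¹ * gfun T d Fs ε := by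
      intro η hη
      have hfu : ∀ᶠ ε in 𝓝[>] (0:ℝ), Real.log (ζ ε) / Real.log ε < km ζ + η / 2 :=
        eventually_lt_of_limsup_lt (by rw [hlimsupf]; linarith [hη.1]) hbb
      have hfl : ∀ᶠ ε in 𝓝[>] (0:ℝ), km ζ - η < Real.log (ζ ε) / Real.log ε :=
        eventually_lt_of_lt_liminf (by rw [hliminff]; linarith [hη.1]) hbb2
      have hevρ : ∀ᶠ ε in 𝓝[>] (0:ℝ), ε ∈ Ioc 0 ρ :=
        Ioc_mem_nhdsGT_of_mem ⟨le_rfl, hρpos⟩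
      have hev1 : ∀ᶠ ε in 𝓝[>] (0:ℝ), ε < 1 := by
        filter_upwards [Ioo_mem_nhdsGT_of_mem (⟨le_rfl, one_pos⟩ : (0:ℝ) ∈ Ico 0 1)]
          with ε hε using hε.2
      have hevL : ∀ᶠ ε in 𝓝[>] (0:ℝ), Real.log 2 ≤ η / 2 * (-Real.log ε) := by
        have hmem : (0:ℝ) ∈ Ico 0 (Real.exp (-(2 * Real.log 2 / η))) := ⟨le_rfl, Real.exp_pos _⟩
        filter_upwards [Ioc_mem_nhdsGT_of_mem hmem] with ε hε
        have h1 : Real.log ε ≤ -(2 * Real.log 2 / η) := by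
          calc Real.log ε ≤ Real.log (Real.exp (-(2 * Real.log 2 / η))) :=
                Real.log_le_log hε.1 hε.2
          _ = -(2 * Real.log 2 / η) := Real.log_exp _
        have h2 : 2 * Real.log 2 / η ≤ -Real.log ε := by linarith
        calc Real.log 2 = η / 2 * (2 * Real.log 2 / η) := by
              field_simp [hη.1.ne']
        _ ≤ η / 2 * (-Real.log ε) := mul_le_mul_of_nonneg_left h2 (by linarith [hη.1])
      filter_upwards [hfu, hfl, hevρ, hev1, hevL] with ε hfu hfl hερ hε1 hL
      have hεpos : 0 < ε := hερ.1
      have hlogε : Real.log ε < 0 := Real.log_neg hεpos hε1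
      have hζpos : 0 < ζ ε := zeta_pos hζ hερ
      have hfub : (km ζ + η / 2) * Real.log ε < Real.log (ζ ε) :=
        (div_lt_iff_of_neg hlogε).1 hfu
      have hflb : Real.log (ζ ε) < (km ζ - η) * Real.log ε :=
        (lt_div_iff_of_neg hlogε).1 hfl
      have hlogζ_neg : Real.log (ζ ε) < 0 :=
        lt_trans hflb (mul_neg_of_pos_of_neg (by linarith [hη.2]) hlogε)
      have habsε : |Real.log ε| = -Real.log ε := abs_of_neg hlogε
      have habsζ : |Real.log (ζ ε)| = -Real.log (ζ ε) := abs_of_neg hlogζ_neg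
      have hlog2pos : 0 < Real.log 2 := Real.log_pos (by norm_num)
      have habsζ2 : |Real.log (ζ ε / 2)| = -Real.log (ζ ε) + Real.log 2 := by
        rw [Real.log_div (ne_of_gt hζpos) two_ne_zero,
          abs_of_neg (by linarith : Real.log (ζ ε) - Real.log 2 < 0)]
        ring
      have hM : -Real.log (ζ ε) + Real.log 2 ≤ (km ζ + η) * (-Real.log ε) := by nlinarith
      have hM' : (km ζ - η) * (-Real.log ε) ≤ -Real.log (ζ ε) := by nlinarith
      have hinner1 : innerU T d Fs ε ≤ innerU T (fun x y => ζ (d x y)) Fs (ζ ε / 2) := by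
        apply innerU_mono hFol.1
        · intro n
          exact one_le_spanNum (exists_spanning hT hd hc _ (hFol.1 n) hεpos)
        · intro n
          exact comp_ge_spanNum hT hd hc hρb hρpos hζ _ (hFol.1 n) hερ
            ⟨half_pos hζpos, half_lt_self hζpos⟩
      have hinner2 : innerU T (fun x y => ζ (d x y)) Fs (ζ ε) ≤ innerU T d Fs ε := by
        apply innerU_mono hFol.1
        · intro n
          exact one_le_spanNum (exists_spanning_comp hT hd hc hρb hρpos hζ _ (hFol.1 n) hζpos)
        · intro n
          exact comp_le_spanNum hT hd hc hρb hζ _ (hFol.1 n) hερ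
      constructor
      · have hc0 : ENNReal.ofReal (km ζ + η) ≠ 0 := by
          simp only [ne_eq, ENNReal.ofReal_eq_zero, not_le]
          linarith [hη.1]
        have hLabs : ENNReal.ofReal |Real.log (ζ ε / 2)| ≤
            ENNReal.ofReal (km ζ + η) * ENNReal.ofReal |Real.log ε| := by
          rw [habsζ2, habsε, ← ENNReal.ofReal_mul (by linarith [hη.1, hkpos] : (0:ℝ) ≤ km ζ + η)]
          exact ENNReal.ofReal_le_ofReal hM
        calc gfun T d Fs ε = innerU T d Fs ε / ENNReal.ofReal |Real.log ε| := rfl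
        _ ≤ innerU T (fun x y => ζ (d x y)) Fs (ζ ε / 2) / ENNReal.ofReal |Real.log ε| :=
            ENNReal.div_le_div_right hinner1 _
        _ = ENNReal.ofReal (km ζ + η) * (innerU T (fun x y => ζ (d x y)) Fs (ζ ε / 2) /
              (ENNReal.ofReal (km ζ + η) * ENNReal.ofReal |Real.log ε|)) :=
            (ennreal_mul_div_mul hc0 ENNReal.ofReal_ne_top).symm
        _ ≤ ENNReal.ofReal (km ζ + η) * (innerU T (fun x y => ζ (d x y)) Fs (ζ ε / 2) /
              ENNReal.ofReal |Real.log (ζ ε / 2)|) :=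
            mul_le_mul_right (ENNReal.div_le_div_left hLabs _) _
        _ = ENNReal.ofReal (km ζ + η) * gfun T (fun x y => ζ (d x y)) Fs (ζ ε / 2) := rfl
      · have hc0 : ENNReal.ofReal (km ζ - η) ≠ 0 := by
          simp only [ne_eq, ENNReal.ofReal_eq_zero, not_le]
          linarith [hη.2]
        have hLabs2 : ENNReal.ofReal (km ζ - η) * ENNReal.ofReal |Real.log ε| ≤
            ENNReal.ofReal |Real.log (ζ ε)| := by
          rw [habsζ, habsε, ← ENNReal.ofReal_mul (by linarith [hη.2] : (0:ℝ) ≤ km ζ - η)]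
          exact ENNReal.ofReal_le_ofReal hM'
        calc gfun T (fun x y => ζ (d x y)) Fs (ζ ε)
            = innerU T (fun x y => ζ (d x y)) Fs (ζ ε) / ENNReal.ofReal |Real.log (ζ ε)| := rfl
        _ ≤ innerU T d Fs ε / ENNReal.ofReal |Real.log (ζ ε)| :=
            ENNReal.div_le_div_right hinner2 _
        _ ≤ innerU T d Fs ε / (ENNReal.ofReal (km ζ - η) * ENNReal.ofReal |Real.log ε|) :=
            ENNReal.div_le_div_left hLabs2 _
        _ = (ENNReal.ofReal (km ζ - η))⁻¹ * (innerU T d Fs ε / ENNReal.ofReal |Real.log ε|) :=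
            ennreal_div_mul hc0 ENNReal.ofReal_ne_top
        _ = (ENNReal.ofReal (km ζ - η))⁻¹ * gfun T d Fs ε := rfl
    -- assemble the four inequalities
    have claimU1 : ∀ η : ℝ, η ∈ Ioo 0 (km ζ) →
        limsup (gfun T d Fs) (𝓝[>] (0:ℝ)) ≤ ENNReal.ofReal (km ζ + η) *
          limsup (gfun T (fun x y => ζ (d x y)) Fs) (𝓝[>] (0:ℝ)) := by
      intro η hη
      calc limsup (gfun T d Fs) (𝓝[>] (0:ℝ))
          ≤ limsup (fun ε => ENNReal.ofReal (km ζ + η) *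
              gfun T (fun x y => ζ (d x y)) Fs (ζ ε / 2)) (𝓝[>] (0:ℝ)) :=
            limsup_le_limsup ((key η hη).mono fun ε h => h.1)
      _ = ENNReal.ofReal (km ζ + η) *
            limsup (fun ε => gfun T (fun x y => ζ (d x y)) Fs (ζ ε / 2)) (𝓝[>] (0:ℝ)) :=
            ENNReal.limsup_const_mul_of_ne_top ENNReal.ofReal_ne_top
      _ = ENNReal.ofReal (km ζ + η) *
            limsup (gfun T (fun x y => ζ (d x y)) Fs) (𝓝[>] (0:ℝ)) := by
            rw [show (fun ε => gfun T (fun x y => ζ (d x y)) Fs (ζ ε / 2))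
                = gfun T (fun x y => ζ (d x y)) Fs ∘ (fun ε => ζ ε / 2) from rfl,
              limsup_comp, hmap2]
    have claimU2 : ∀ η : ℝ, η ∈ Ioo 0 (km ζ) →
        ENNReal.ofReal (km ζ - η) *
          limsup (gfun T (fun x y => ζ (d x y)) Fs) (𝓝[>] (0:ℝ)) ≤
        limsup (gfun T d Fs) (𝓝[>] (0:ℝ)) := by
      intro η hη
      have hc0 : ENNReal.ofReal (km ζ - η) ≠ 0 := by
        simp only [ne_eq, ENNReal.ofReal_eq_zero, not_le]
        linarith [hη.2]
      have hB : limsup (gfun T (fun x y => ζ (d x y)) Fs) (𝓝[>] (0:ℝ)) ≤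
          (ENNReal.ofReal (km ζ - η))⁻¹ * limsup (gfun T d Fs) (𝓝[>] (0:ℝ)) := by
        calc limsup (gfun T (fun x y => ζ (d x y)) Fs) (𝓝[>] (0:ℝ))
            = limsup (gfun T (fun x y => ζ (d x y)) Fs ∘ ζ) (𝓝[>] (0:ℝ)) := by
              rw [limsup_comp, hmap1]
        _ ≤ limsup (fun ε => (ENNReal.ofReal (km ζ - η))⁻¹ * gfun T d Fs ε) (𝓝[>] (0:ℝ)) :=
              limsup_le_limsup ((key η hη).mono fun ε h => h.2)
        _ = (ENNReal.ofReal (km ζ - η))⁻¹ * limsup (gfun T d Fs) (𝓝[>] (0:ℝ)) :=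
              ENNReal.limsup_const_mul_of_ne_top (ENNReal.inv_ne_top.2 hc0)
      calc ENNReal.ofReal (km ζ - η) * limsup (gfun T (fun x y => ζ (d x y)) Fs) (𝓝[>] (0:ℝ))
          ≤ ENNReal.ofReal (km ζ - η) *
            ((ENNReal.ofReal (km ζ - η))⁻¹ * limsup (gfun T d Fs) (𝓝[>] (0:ℝ))) :=
            mul_le_mul_right hB _
      _ = limsup (gfun T d Fs) (𝓝[>] (0:ℝ)) := by
            rw [← mul_assoc, ENNReal.mul_inv_cancel hc0 ENNReal.ofReal_ne_top, one_mul]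
    have claimL1 : ∀ η : ℝ, η ∈ Ioo 0 (km ζ) →
        liminf (gfun T d Fs) (𝓝[>] (0:ℝ)) ≤ ENNReal.ofReal (km ζ + η) *
          liminf (gfun T (fun x y => ζ (d x y)) Fs) (𝓝[>] (0:ℝ)) := by
      intro η hη
      have hc0 : ENNReal.ofReal (km ζ + η) ≠ 0 := by
        simp only [ne_eq, ENNReal.ofReal_eq_zero, not_le]
        linarith [hη.1]
      calc liminf (gfun T d Fs) (𝓝[>] (0:ℝ))
          ≤ liminf (fun ε => ENNReal.ofReal (km ζ + η) *
              gfun T (fun x y => ζ (d x y)) Fs (ζ ε / 2)) (𝓝[>] (0:ℝ)) :=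
            liminf_le_liminf ((key η hη).mono fun ε h => h.1)
      _ = ENNReal.ofReal (km ζ + η) *
            liminf (fun ε => gfun T (fun x y => ζ (d x y)) Fs (ζ ε / 2)) (𝓝[>] (0:ℝ)) :=
            liminf_const_mul_of_ne_top' ENNReal.ofReal_ne_top hc0
      _ = ENNReal.ofReal (km ζ + η) *
            liminf (gfun T (fun x y => ζ (d x y)) Fs) (𝓝[>] (0:ℝ)) := by
            rw [show (fun ε => gfun T (fun x y => ζ (d x y)) Fs (ζ ε / 2))
                = gfun T (fun x y => ζ (d x y)) Fs ∘ (fun ε => ζ ε / 2) from rfl,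
              liminf_comp, hmap2]
    have claimL2 : ∀ η : ℝ, η ∈ Ioo 0 (km ζ) →
        ENNReal.ofReal (km ζ - η) *
          liminf (gfun T (fun x y => ζ (d x y)) Fs) (𝓝[>] (0:ℝ)) ≤
        liminf (gfun T d Fs) (𝓝[>] (0:ℝ)) := by
      intro η hη
      have hc0 : ENNReal.ofReal (km ζ - η) ≠ 0 := by
        simp only [ne_eq, ENNReal.ofReal_eq_zero, not_le]
        linarith [hη.2]
      have hB : liminf (gfun T (fun x y => ζ (d x y)) Fs) (𝓝[>] (0:ℝ)) ≤
          (ENNReal.ofReal (km ζ - η))⁻¹ * liminf (gfun T d Fs) (𝓝[>] (0:ℝ)) := by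
        calc liminf (gfun T (fun x y => ζ (d x y)) Fs) (𝓝[>] (0:ℝ))
            = liminf (gfun T (fun x y => ζ (d x y)) Fs ∘ ζ) (𝓝[>] (0:ℝ)) := by
              rw [liminf_comp, hmap1]
        _ ≤ liminf (fun ε => (ENNReal.ofReal (km ζ - η))⁻¹ * gfun T d Fs ε) (𝓝[>] (0:ℝ)) :=
              liminf_le_liminf ((key η hη).mono fun ε h => h.2)
        _ = (ENNReal.ofReal (km ζ - η))⁻¹ * liminf (gfun T d Fs) (𝓝[>] (0:ℝ)) :=
              liminf_const_mul_of_ne_top' (ENNReal.inv_ne_top.2 hc0)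
                (ENNReal.inv_ne_zero.2 ENNReal.ofReal_ne_top)
      calc ENNReal.ofReal (km ζ - η) * liminf (gfun T (fun x y => ζ (d x y)) Fs) (𝓝[>] (0:ℝ))
          ≤ ENNReal.ofReal (km ζ - η) *
            ((ENNReal.ofReal (km ζ - η))⁻¹ * liminf (gfun T d Fs) (𝓝[>] (0:ℝ))) :=
            mul_le_mul_right hB _
      _ = liminf (gfun T d Fs) (𝓝[>] (0:ℝ)) := by
            rw [← mul_assoc, ENNReal.mul_inv_cancel hc0 ENNReal.ofReal_ne_top, one_mul]
    rw [mdimMUpper_eq T d Fs, mdimMUpper_eq T (fun x y => ζ (d x y)) Fs,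
      mdimMLower_eq T d Fs, mdimMLower_eq T (fun x y => ζ (d x y)) Fs]
    exact ⟨squeeze_ennreal hkpos claimU1 claimU2, squeeze_ennreal hkpos claimL1 claimL2⟩

end MeanDim18
end

section
/- Let G be a countable discrete group, (X,d) a G-system with ρ := diam_d(X) < 1, and {F_n} a Følner sequence in G. Suppose overline{mdim}_M(X,G,d) < ∞. Then the maps A⁺[0,ρ] → ℝ given by ζ ↦ overline{mdim}_M(X,G,ζ∘d) and ζ ↦ underline{mdim}_M(X,G,ζ∘d) are continuous with respect to the topology T on A⁺[0,ρ] generated by the sets B̃(ζ,ε) = { ϑ ∈ A⁺[0,ρ] : ζ(x)(x^ε − 1) < ϑ(x) − ζ(x) < ζ(x)(1 − x^ε)/x^ε for all x ∈ (0,ρ] }, ζ ∈ A⁺[0,ρ], ε > 0. (Equivalently, if d : X×X → [0,ρ] is surjective and A⁺_d(X) = { ζ∘d : ζ ∈ A⁺[0,ρ] } carries the topology W making ζ ↦ ζ∘d a homeomorphism from (A⁺[0,ρ],T), then ζ_d ↦ overline{mdim}_M(X,G,ζ_d) and ζ_d ↦ underline{mdim}_M(X,G,ζ_d) are continuous on (A⁺_d(X),W).)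 -/
open Filter Set Topology
open scoped ENNReal

namespace MeanDim19

/-- `d` is a metric on `X`. -/
def IsMetricOn {X : Type*} (d : X → X → ℝ) : Prop :=
  (∀ x y, 0 ≤ d x y) ∧ (∀ x y, d x y = 0 ↔ x = y) ∧
    (∀ x y, d x y = d y x) ∧ ∀ x y z, d x z ≤ d x y + d y z

/-- `d` induces the given topology on `X`. -/
def InducesTopology {X : Type*} [TopologicalSpace X] (d : X → X → ℝ) : Prop :=
  ∀ (x : X) (s : Set X), s ∈ 𝓝 x ↔ ∃ ε > 0, {y : X | d x y < ε} ⊆ s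

/-- `T` is a continuous (left) action of `G` on `X`. -/
def IsContAction {G X : Type*} [Group G] [TopologicalSpace X] (T : G → X → X) : Prop :=
  (∀ x : X, T 1 x = x) ∧ (∀ g h : G, ∀ x : X, T (g * h) x = T g (T h x)) ∧
    ∀ g : G, Continuous (T g)

/-- The dynamical (Bowen) metric `d_F(x,y) = max_{g ∈ F} d(gx, gy)`. -/
noncomputable def dynDist {G X : Type*} (T : G → X → X) (d : X → X → ℝ)
    (F : Finset G) (x y : X) : ℝ :=
  if h : F.Nonempty then F.sup' h (fun g => d (T g x) (T g y)) else 0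

/-- `K` is an `(F,ε)`-spanning subset of `E`. -/
def IsSpanningSet {G X : Type*} (T : G → X → X) (d : X → X → ℝ)
    (F : Finset G) (ε : ℝ) (E : Set X) (K : Finset X) : Prop :=
  ↑K ⊆ E ∧ ∀ x ∈ E, ∃ y ∈ K, dynDist T d F x y ≤ ε

/-- `r_F(d,ε,E)`: minimal cardinality of an `(F,ε)`-spanning subset of `E`. -/
noncomputable def spanNum {G X : Type*} (T : G → X → X) (d : X → X → ℝ)
    (F : Finset G) (ε : ℝ) (E : Set X) : ℕ :=
  sInf {n : ℕ | ∃ K : Finset X, IsSpanningSet T d F ε E K ∧ K.card = n}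

/-- The max-metric on the product. -/
def prodDist {X Y : Type*} (dX : X → X → ℝ) (dY : Y → Y → ℝ) (p q : X × Y) : ℝ :=
  max (dX p.1 q.1) (dY p.2 q.2)

/-- The diagonal action on the product. -/
def prodAction {G X Y : Type*} (T : G → X → X) (S : G → Y → Y) (g : G) (p : X × Y) : X × Y :=
  (T g p.1, S g p.2)

/-- `{F n}` is a Følner sequence of nonempty finite subsets of `G`. -/
def IsFolner {G : Type*} [Group G] (Fs : ℕ → Finset G) : Prop :=
  letI := Classical.decEq G
  (∀ n, (Fs n).Nonempty) ∧
    ∀ g : G, Tendsto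
      (fun n => (((Fs n) \ (Fs n).image (fun h => g * h)).card : ℝ) / ((Fs n).card : ℝ))
      atTop (𝓝 0)

/-- Upper metric mean dimension (via spanning numbers), w.r.t. a Følner sequence. -/
noncomputable def mdimMUpper {G X : Type*} (T : G → X → X) (d : X → X → ℝ)
    (Fs : ℕ → Finset G) (E : Set X) : ℝ≥0∞ :=
  limsup (fun ε : ℝ =>
      (limsup (fun n =>
          ENNReal.ofReal (Real.log (spanNum T d (Fs n) ε E : ℝ) / ((Fs n).card : ℝ))) atTop)
        / ENNReal.ofReal |Real.log ε|) (𝓝[>] (0 : ℝ))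

/-- Lower metric mean dimension (via spanning numbers), w.r.t. a Følner sequence. -/
noncomputable def mdimMLower {G X : Type*} (T : G → X → X) (d : X → X → ℝ)
    (Fs : ℕ → Finset G) (E : Set X) : ℝ≥0∞ :=
  liminf (fun ε : ℝ =>
      (limsup (fun n =>
          ENNReal.ofReal (Real.log (spanNum T d (Fs n) ε E : ℝ) / ((Fs n).card : ℝ))) atTop)
        / ENNReal.ofReal |Real.log ε|) (𝓝[>] (0 : ℝ))


/-- Diameter of a set with respect to an abstract metric `d` (with `diam ∅ = 0`). -/
noncomputable def setDiam {X : Type*} (d : X → X → ℝ) (A : Set X) : ℝ :=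
  sSup {r : ℝ | ∃ x ∈ A, ∃ y ∈ A, r = d x y}

/-- `ζ ∈ A[0,ρ]`: continuous, increasing, subadditive on `[0,ρ]`, nonnegative,
and vanishing exactly at `0`. -/
def MemA (ρ : ℝ) (ζ : ℝ → ℝ) : Prop :=
  ContinuousOn ζ (Set.Icc 0 ρ) ∧ MonotoneOn ζ (Set.Icc 0 ρ) ∧
    (∀ x ∈ Set.Icc 0 ρ, 0 ≤ ζ x) ∧
    (∀ x ∈ Set.Icc 0 ρ, ∀ y ∈ Set.Icc 0 ρ, x + y ∈ Set.Icc 0 ρ → ζ (x + y) ≤ ζ x + ζ y) ∧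
    ∀ x ∈ Set.Icc 0 ρ, (ζ x = 0 ↔ x = 0)

/-- `k_m(ζ) = liminf_{ε→0⁺} log ζ(ε) / log ε`. -/
noncomputable def km (ζ : ℝ → ℝ) : ℝ :=
  liminf (fun ε : ℝ => Real.log (ζ ε) / Real.log ε) (𝓝[>] (0 : ℝ))

/-- `k_M(ζ) = limsup_{ε→0⁺} log ζ(ε) / log ε`. -/
noncomputable def kM (ζ : ℝ → ℝ) : ℝ :=
  limsup (fun ε : ℝ => Real.log (ζ ε) / Real.log ε) (𝓝[>] (0 : ℝ))

/-- `A⁺[0,ρ]`: members of `A[0,ρ]` with `k_m(ζ) = k_M(ζ) > 0`. -/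
def MemAplus (ρ : ℝ) (ζ : ℝ → ℝ) : Prop :=
  MemA ρ ζ ∧ km ζ = kM ζ ∧ 0 < km ζ

/-- The subbasic set `B̃(ζ,ε)` of the topology `T` on `A⁺[0,ρ]`. -/
def tildeB (ρ : ℝ) (ζ : ℝ → ℝ) (ε : ℝ) : Set {f : ℝ → ℝ // MemAplus ρ f} :=
  {ϑ | ∀ x ∈ Set.Ioc (0 : ℝ) ρ,
    ζ x * (x ^ ε - 1) < ϑ.1 x - ζ x ∧ ϑ.1 x - ζ x < ζ x * (1 - x ^ ε) / x ^ ε}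

/-- The topology `T` on `A⁺[0,ρ]` generated by the sets `B̃(ζ,ε)`. -/
def Ttop (ρ : ℝ) : TopologicalSpace {f : ℝ → ℝ // MemAplus ρ f} :=
  TopologicalSpace.generateFrom
    {S | ∃ ζ : ℝ → ℝ, MemAplus ρ ζ ∧ ∃ ε : ℝ, 0 < ε ∧ S = tildeB ρ ζ ε}


/- ================= auxiliary lemmas ================= -/

open Filter Set Topology
open scoped ENNReal

namespace MeanDim19Aux

/-- Multiplication by a finite nonzero constant as an order isomorphism of `ℝ≥0∞`. -/
noncomputable def mulIso (c : ℝ≥0∞) (h0 : c ≠ 0) (ht : c ≠ ⊤) : ℝ≥0∞ ≃o ℝ≥0∞ where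
  toFun x := x * c
  invFun x := x / c
  left_inv x := by
    show x * c / c = x
    rw [div_eq_mul_inv, mul_assoc, ENNReal.mul_inv_cancel h0 ht, mul_one]
  right_inv x := ENNReal.div_mul_cancel h0 ht
  map_rel_iff' := ENNReal.mul_le_mul_iff_left h0 ht

lemma limsup_map_eq {α β : Type*} (u : β → ℝ≥0∞) (g : α → β) (l : Filter α) :
    limsup u (Filter.map g l) = limsup (fun x => u (g x)) l := by
  rw [limsup_eq, limsup_eq]
  congr 1

lemma liminf_map_eq {α β : Type*} (u : β → ℝ≥0∞) (g : α → β) (l : Filter α) :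
    liminf u (Filter.map g l) = liminf (fun x => u (g x)) l := by
  rw [liminf_eq, liminf_eq]
  congr 1

lemma limsup_div_const {α : Type*} (l : Filter α) (u : α → ℝ≥0∞) (c : ℝ≥0∞)
    (h0 : c ≠ 0) (ht : c ≠ ⊤) :
    limsup (fun x => u x / c) l = limsup u l / c := by
  have := ((mulIso c h0 ht).symm.limsup_apply (f := l) (u := u)).symm
  simpa [mulIso] using this

lemma liminf_div_const {α : Type*} (l : Filter α) (u : α → ℝ≥0∞) (c : ℝ≥0∞)
    (h0 : c ≠ 0) (ht : c ≠ ⊤) :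
    liminf (fun x => u x / c) l = liminf u l / c := by
  have := ((mulIso c h0 ht).symm.liminf_apply (f := l) (u := u)).symm
  simpa [mulIso] using this

lemma rpow_map_nhdsGT {θ : ℝ} (hθ : 0 < θ) :
    Filter.map (fun x : ℝ => x ^ θ) (𝓝[>] (0:ℝ)) = 𝓝[>] (0:ℝ) := by
  have tends : ∀ σ : ℝ, 0 < σ →
      Tendsto (fun x : ℝ => x ^ σ) (𝓝[>] (0:ℝ)) (𝓝[>] (0:ℝ)) := by
    intro σ hσ
    rw [tendsto_nhdsWithin_iff]
    constructor
    · have h1 : ContinuousAt (fun x : ℝ => x ^ σ) 0 :=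
        Real.continuousAt_rpow_const 0 σ (Or.inr hσ.le)
      have h2 := h1.tendsto
      rw [Real.zero_rpow hσ.ne'] at h2
      exact h2.mono_left nhdsWithin_le_nhds
    · filter_upwards [self_mem_nhdsWithin] with x hx
      exact Real.rpow_pos_of_pos hx σ
  have h1 := tends θ hθ
  have h2 := tends (1/θ) (by positivity)
  have hev1 : ((fun x : ℝ => x ^ (1/θ)) ∘ fun x : ℝ => x ^ θ) =ᶠ[𝓝[>] (0:ℝ)] id := by
    filter_upwards [self_mem_nhdsWithin] with x hx
    simp only [Function.comp_apply, id_eq, ← Real.rpow_mul (le_of_lt hx),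
      mul_one_div_cancel hθ.ne', Real.rpow_one]
  have hev2 : ((fun x : ℝ => x ^ θ) ∘ fun x : ℝ => x ^ (1/θ)) =ᶠ[𝓝[>] (0:ℝ)] id := by
    filter_upwards [self_mem_nhdsWithin] with x hx
    simp only [Function.comp_apply, id_eq, ← Real.rpow_mul (le_of_lt hx)]
    rw [one_div, inv_mul_cancel₀ hθ.ne', Real.rpow_one]
  have e1 : Filter.map (fun x : ℝ => x ^ θ)
      (Filter.map (fun x : ℝ => x ^ (1/θ)) (𝓝[>] (0:ℝ))) = 𝓝[>] (0:ℝ) := by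
    rw [Filter.map_map, Filter.map_congr hev2, Filter.map_id]
  refine le_antisymm h1 ?_
  calc 𝓝[>] (0:ℝ) = Filter.map (fun x : ℝ => x ^ θ)
        (Filter.map (fun x : ℝ => x ^ (1/θ)) (𝓝[>] (0:ℝ))) := e1.symm
    _ ≤ Filter.map (fun x : ℝ => x ^ θ) (𝓝[>] (0:ℝ)) := Filter.map_mono h2

lemma log_natCast_mono {m n : ℕ} (h : m ≤ n) : Real.log m ≤ Real.log n := by
  rcases Nat.eq_zero_or_pos m with rfl | hm
  · rcases Nat.eq_zero_or_pos n with rfl | hn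
    · exact le_refl _
    · simpa using Real.log_nonneg (by exact_mod_cast hn)
  · exact Real.log_le_log (by exact_mod_cast hm) (by exact_mod_cast h)

end MeanDim19Aux
section DynAux

open MeanDim19Aux

variable {G X : Type*} [Group G] [TopologicalSpace X] [CompactSpace X]

lemma exists_spanning (T : G → X → X) (hTc : ∀ g : G, Continuous (T g))
    (d' : X → X → ℝ) (hc' : ∀ c : X, Continuous fun z => d' c z)
    (h0 : ∀ x : X, d' x x = 0) (hs : ∀ x y : X, d' x y = d' y x)
    (F : Finset G) {ε : ℝ} (hε : 0 < ε) :
    ∃ K : Finset X, IsSpanningSet T d' F ε (Set.univ : Set X) K := by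
  classical
  set U : X → Set X := fun x => ⋂ g ∈ F, {y | d' (T g x) (T g y) < ε} with hU
  have hUopen : ∀ x, IsOpen (U x) := by
    intro x
    refine isOpen_biInter_finset fun g _ => ?_
    have hco : Continuous fun y => d' (T g x) (T g y) := (hc' (T g x)).comp (hTc g)
    exact isOpen_lt hco continuous_const
  have hcov : (Set.univ : Set X) ⊆ ⋃ x : X, U x := by
    intro x _
    exact Set.mem_iUnion.2 ⟨x, Set.mem_iInter₂.2 fun g _ => by simp [h0, hε]⟩
  obtain ⟨t, ht⟩ := isCompact_univ.elim_finite_subcover U hUopen hcov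
  refine ⟨t, Set.subset_univ _, fun x _ => ?_⟩
  obtain ⟨y, hyt, hxy⟩ := Set.mem_iUnion₂.1 (ht (Set.mem_univ x))
  refine ⟨y, hyt, ?_⟩
  unfold dynDist
  split
  · next hF =>
      refine (Finset.sup'_le_iff hF _).2 fun g hg => ?_
      have hlt := Set.mem_iInter₂.1 hxy g hg
      have : d' (T g y) (T g x) < ε := hlt
      rw [hs] at this
      exact this.le
  · exact hε.le

lemma spanNum_le_spanNum {T : G → X → X} {d₁ d₂ : X → X → ℝ} {F : Finset G}
    (hF : F.Nonempty) {ε₁ ε₂ : ℝ}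
    (h : ∀ x y : X, d₂ x y ≤ ε₂ → d₁ x y ≤ ε₁)
    (hex : ∃ K : Finset X, IsSpanningSet T d₂ F ε₂ (Set.univ : Set X) K) :
    spanNum T d₁ F ε₁ (Set.univ : Set X) ≤ spanNum T d₂ F ε₂ (Set.univ : Set X) := by
  obtain ⟨K₀, hK₀⟩ := hex
  have hne : {n : ℕ | ∃ K : Finset X,
      IsSpanningSet T d₂ F ε₂ (Set.univ : Set X) K ∧ K.card = n}.Nonempty :=
    ⟨K₀.card, K₀, hK₀, rfl⟩
  obtain ⟨K, hK, hcard⟩ := Nat.sInf_mem hne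
  have span1 : IsSpanningSet T d₁ F ε₁ (Set.univ : Set X) K := by
    refine ⟨hK.1, fun x hx => ?_⟩
    obtain ⟨y, hy, hd⟩ := hK.2 x hx
    refine ⟨y, hy, ?_⟩
    unfold dynDist at hd ⊢
    rw [dif_pos hF] at hd ⊢
    exact (Finset.sup'_le_iff hF _).2 fun g hg =>
      h _ _ ((Finset.le_sup' (fun g => d₂ (T g x) (T g y)) hg).trans hd)
  calc spanNum T d₁ F ε₁ (Set.univ : Set X) ≤ K.card := Nat.sInf_le ⟨K, span1, rfl⟩
    _ = spanNum T d₂ F ε₂ (Set.univ : Set X) := hcard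

/-- Core comparison lemma for metric mean dimensions. -/
lemma mdim_comp_le (T : G → X → X) (hTc : ∀ g : G, Continuous (T g))
    (d₁ d₂ : X → X → ℝ)
    (hc₂ : ∀ c : X, Continuous fun z => d₂ c z)
    (h0₂ : ∀ x : X, d₂ x x = 0) (hs₂ : ∀ x y : X, d₂ x y = d₂ y x)
    (Fs : ℕ → Finset G) (hFne : ∀ n, (Fs n).Nonempty)
    {θ : ℝ} (hθ : 0 < θ)
    (h : ∀ᶠ ε' in 𝓝[>] (0:ℝ), ∀ x y : X, d₂ x y ≤ ε' → d₁ x y ≤ ε' ^ θ) :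
    mdimMUpper T d₁ Fs (Set.univ : Set X) ≤
      mdimMUpper T d₂ Fs (Set.univ : Set X) / ENNReal.ofReal θ ∧
    mdimMLower T d₁ Fs (Set.univ : Set X) ≤
      mdimMLower T d₂ Fs (Set.univ : Set X) / ENNReal.ofReal θ := by
  set Φ₁ : ℝ → ℝ≥0∞ := fun ε =>
    (limsup (fun n => ENNReal.ofReal
        (Real.log (spanNum T d₁ (Fs n) ε (Set.univ : Set X) : ℝ) / ((Fs n).card : ℝ)))
      atTop) / ENNReal.ofReal |Real.log ε| with hΦ₁
  set Φ₂ : ℝ → ℝ≥0∞ := fun ε =>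
    (limsup (fun n => ENNReal.ofReal
        (Real.log (spanNum T d₂ (Fs n) ε (Set.univ : Set X) : ℝ) / ((Fs n).card : ℝ)))
      atTop) / ENNReal.ofReal |Real.log ε| with hΦ₂
  have hc0 : (ENNReal.ofReal θ) ≠ 0 := (ENNReal.ofReal_pos.2 hθ).ne'
  have hctop : (ENNReal.ofReal θ) ≠ ⊤ := ENNReal.ofReal_ne_top
  have key : ∀ᶠ ε' in 𝓝[>] (0:ℝ), Φ₁ (ε' ^ θ) ≤ Φ₂ ε' / ENNReal.ofReal θ := by
    filter_upwards [h, self_mem_nhdsWithin] with ε' himp (hpos : (0:ℝ) < ε')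
    have hspan : ∀ n, spanNum T d₁ (Fs n) (ε' ^ θ) (Set.univ : Set X)
        ≤ spanNum T d₂ (Fs n) ε' (Set.univ : Set X) := fun n =>
      spanNum_le_spanNum (hFne n) himp (exists_spanning T hTc d₂ hc₂ h0₂ hs₂ (Fs n) hpos)
    have hR : limsup (fun n => ENNReal.ofReal
        (Real.log (spanNum T d₁ (Fs n) (ε' ^ θ) (Set.univ : Set X) : ℝ) / ((Fs n).card : ℝ)))
        atTop ≤
        limsup (fun n => ENNReal.ofReal
        (Real.log (spanNum T d₂ (Fs n) ε' (Set.univ : Set X) : ℝ) / ((Fs n).card : ℝ)))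
        atTop := by
      refine Filter.limsup_le_limsup (Eventually.of_forall fun n => ?_)
      refine ENNReal.ofReal_le_ofReal ?_
      have hlog := log_natCast_mono (hspan n)
      have hcpos : (0:ℝ) < ((Fs n).card : ℝ) := by
        exact_mod_cast Finset.card_pos.2 (hFne n)
      exact div_le_div_of_nonneg_right hlog hcpos.le
    have habs : |Real.log (ε' ^ θ)| = θ * |Real.log ε'| := by
      rw [Real.log_rpow hpos, abs_mul, abs_of_pos hθ]
    have hdivdiv : ∀ a : ℝ≥0∞,
        a / (ENNReal.ofReal θ * ENNReal.ofReal |Real.log ε'|) =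
          a / ENNReal.ofReal |Real.log ε'| / ENNReal.ofReal θ := by
      intro a
      rw [div_eq_mul_inv, ENNReal.mul_inv (Or.inl hc0) (Or.inl hctop),
        div_eq_mul_inv, div_eq_mul_inv, mul_comm (ENNReal.ofReal θ)⁻¹, ← mul_assoc]
    calc Φ₁ (ε' ^ θ)
        = (limsup (fun n => ENNReal.ofReal
            (Real.log (spanNum T d₁ (Fs n) (ε' ^ θ) (Set.univ : Set X) : ℝ)
              / ((Fs n).card : ℝ))) atTop) /
          (ENNReal.ofReal θ * ENNReal.ofReal |Real.log ε'|) := by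
          rw [hΦ₁]; simp only []; rw [habs, ENNReal.ofReal_mul hθ.le]
      _ ≤ (limsup (fun n => ENNReal.ofReal
            (Real.log (spanNum T d₂ (Fs n) ε' (Set.univ : Set X) : ℝ)
              / ((Fs n).card : ℝ))) atTop) /
          (ENNReal.ofReal θ * ENNReal.ofReal |Real.log ε'|) :=
          ENNReal.div_le_div_right hR _
      _ = Φ₂ ε' / ENNReal.ofReal θ := hdivdiv _
  have hmap := rpow_map_nhdsGT hθ
  constructor
  · have e1 : mdimMUpper T d₁ Fs (Set.univ : Set X) = limsup Φ₁ (𝓝[>] (0:ℝ)) := rfl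
    have e2 : mdimMUpper T d₂ Fs (Set.univ : Set X) = limsup Φ₂ (𝓝[>] (0:ℝ)) := rfl
    have esub : limsup Φ₁ (𝓝[>] (0:ℝ)) = limsup (fun ε' => Φ₁ (ε' ^ θ)) (𝓝[>] (0:ℝ)) := by
      rw [← limsup_map_eq Φ₁ (fun x : ℝ => x ^ θ) (𝓝[>] (0:ℝ)), hmap]
    rw [e1, e2, esub]
    calc limsup (fun ε' => Φ₁ (ε' ^ θ)) (𝓝[>] (0:ℝ))
        ≤ limsup (fun ε' => Φ₂ ε' / ENNReal.ofReal θ) (𝓝[>] (0:ℝ)) :=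
          Filter.limsup_le_limsup key
      _ = limsup Φ₂ (𝓝[>] (0:ℝ)) / ENNReal.ofReal θ :=
          limsup_div_const _ _ _ hc0 hctop
  · have e1 : mdimMLower T d₁ Fs (Set.univ : Set X) = liminf Φ₁ (𝓝[>] (0:ℝ)) := rfl
    have e2 : mdimMLower T d₂ Fs (Set.univ : Set X) = liminf Φ₂ (𝓝[>] (0:ℝ)) := rfl
    have esub : liminf Φ₁ (𝓝[>] (0:ℝ)) = liminf (fun ε' => Φ₁ (ε' ^ θ)) (𝓝[>] (0:ℝ)) := by
      rw [← liminf_map_eq Φ₁ (fun x : ℝ => x ^ θ) (𝓝[>] (0:ℝ)), hmap]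
    rw [e1, e2, esub]
    calc liminf (fun ε' => Φ₁ (ε' ^ θ)) (𝓝[>] (0:ℝ))
        ≤ liminf (fun ε' => Φ₂ ε' / ENNReal.ofReal θ) (𝓝[>] (0:ℝ)) :=
          Filter.liminf_le_liminf key
      _ = liminf Φ₂ (𝓝[>] (0:ℝ)) / ENNReal.ofReal θ :=
          liminf_div_const _ _ _ hc0 hctop

end DynAux



section AsympAux

open MeanDim19Aux

/-- Eventual power bounds near `0⁺` for a function in `A⁺[0,ρ]`. -/
lemma zeta_asymp {ρ : ℝ} {ζ : ℝ → ℝ} (hζ : MemAplus ρ ζ) (hρ : 0 < ρ) {η : ℝ} (hη : 0 < η) :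
    ∀ᶠ t in 𝓝[>] (0:ℝ), t ^ (km ζ + η) ≤ ζ t ∧ ζ t ≤ t ^ (km ζ - η) := by
  obtain ⟨⟨hcont, hmono, hnn, _, hzero⟩, hkm, hpos⟩ := hζ
  have hIoc : ∀ᶠ t in 𝓝[>] (0:ℝ), t ∈ Set.Ioc 0 ρ ∧ t < 1 := by
    have hmin : (0:ℝ) < min ρ 1 := lt_min hρ one_pos
    have h1 : ∀ᶠ t in 𝓝 (0:ℝ), t < min ρ 1 := by
      filter_upwards [isOpen_Iio.mem_nhds (show (0:ℝ) ∈ Set.Iio (min ρ 1) from hmin)] with t ht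
      exact ht
    filter_upwards [h1.filter_mono nhdsWithin_le_nhds, self_mem_nhdsWithin] with t ht ht0
    exact ⟨⟨ht0, (ht.trans_le (min_le_left _ _)).le⟩, ht.trans_le (min_le_right _ _)⟩
  have hζpos : ∀ᶠ t in 𝓝[>] (0:ℝ), 0 < ζ t := by
    filter_upwards [hIoc] with t ⟨⟨ht0, htρ⟩, _⟩
    refine (hnn t ⟨ht0.le, htρ⟩).lt_of_ne fun h => ?_
    exact ht0.ne' ((hzero t ⟨ht0.le, htρ⟩).1 h.symm)
  have hζlt1 : ∀ᶠ t in 𝓝[>] (0:ℝ), ζ t < 1 := by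
    have hz0 : ζ 0 = 0 := (hzero 0 ⟨le_refl _, hρ.le⟩).2 rfl
    have hc0 : Tendsto ζ (𝓝[Set.Icc 0 ρ] 0) (𝓝 0) := by
      have := hcont 0 ⟨le_refl _, hρ.le⟩
      rw [ContinuousWithinAt, hz0] at this
      exact this
    have hIccmem : Set.Icc (0:ℝ) ρ ∈ 𝓝[>] (0:ℝ) := by
      refine mem_nhdsWithin.2 ⟨Set.Iio ρ, isOpen_Iio, hρ, ?_⟩
      rintro x ⟨hx1, hx2⟩
      exact ⟨(Set.mem_Ioi.1 hx2).le, hx1.le⟩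
    have heq : 𝓝[Set.Icc 0 ρ ∩ Set.Ioi 0] (0:ℝ) = 𝓝[>] (0:ℝ) :=
      nhdsWithin_inter_of_mem hIccmem
    have key : Tendsto ζ (𝓝[>] (0:ℝ)) (𝓝 0) := by
      rw [← heq]
      exact hc0.mono_left (nhdsWithin_mono _ Set.inter_subset_left)
    have hev : ∀ᶠ y in 𝓝 (0:ℝ), y < 1 := by
      filter_upwards [isOpen_Iio.mem_nhds (show (0:ℝ) ∈ Set.Iio 1 by norm_num)] with y hy
      exact hy
    exact key.eventually hev
  set u : ℝ → ℝ := fun t => Real.log (ζ t) / Real.log t with hu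
  have hub : ∀ᶠ t in 𝓝[>] (0:ℝ), 0 ≤ u t := by
    filter_upwards [hIoc, hζpos, hζlt1] with t ⟨⟨ht0, htρ⟩, ht1⟩ hp hl1
    exact div_nonneg_iff.2 (Or.inr ⟨Real.log_nonpos hp.le hl1.le, Real.log_nonpos ht0.le ht1.le⟩)
  have hbdd_ge : IsBoundedUnder (· ≥ ·) (𝓝[>] (0:ℝ)) u := ⟨0, eventually_map.2 hub⟩
  have hbdd_le : IsBoundedUnder (· ≤ ·) (𝓝[>] (0:ℝ)) u := by
    by_contra hnb
    have hempty : {a : ℝ | ∀ᶠ t in 𝓝[>] (0:ℝ), u t ≤ a} = ∅ := by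
      ext a
      simp only [Set.mem_setOf_eq, Set.mem_empty_iff_false, iff_false]
      intro ha
      exact hnb ⟨a, eventually_map.2 ha⟩
    have hM : kM ζ = 0 := by
      rw [kM, Filter.limsup_eq]
      have : {a : ℝ | ∀ᶠ n in 𝓝[>] (0:ℝ), Real.log (ζ n) / Real.log n ≤ a} = ∅ := hempty
      rw [this, Real.sInf_empty]
    rw [hkm] at hpos
    exact hpos.ne' hM
  have hlimsup : limsup u (𝓝[>] (0:ℝ)) = km ζ := by rw [hkm]; rfl
  have hliminf : liminf u (𝓝[>] (0:ℝ)) = km ζ := rfl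
  have h1 : ∀ᶠ t in 𝓝[>] (0:ℝ), u t < km ζ + η :=
    eventually_lt_of_limsup_lt (by rw [hlimsup]; exact lt_add_of_pos_right _ hη) hbdd_le
  have h2 : ∀ᶠ t in 𝓝[>] (0:ℝ), km ζ - η < u t :=
    eventually_lt_of_lt_liminf (by rw [hliminf]; exact sub_lt_self _ hη) hbdd_ge
  filter_upwards [hIoc, hζpos, h1, h2] with t ⟨⟨ht0, htρ⟩, ht1⟩ hp h1t h2t
  have hlt : Real.log t < 0 := Real.log_neg ht0 ht1
  constructor
  · have hl : (km ζ + η) * Real.log t < Real.log (ζ t) := (div_lt_iff_of_neg hlt).1 h1t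
    rw [← Real.log_rpow ht0] at hl
    exact ((Real.log_lt_log_iff (Real.rpow_pos_of_pos ht0 _) hp).1 hl).le
  · have hl : Real.log (ζ t) < (km ζ - η) * Real.log t := (lt_div_iff_of_neg hlt).1 h2t
    rw [← Real.log_rpow ht0] at hl
    exact ((Real.log_lt_log_iff hp (Real.rpow_pos_of_pos ht0 _)).1 hl).le

end AsympAux

section ZeroAux

open MeanDim19Aux

variable {G X : Type*} [Group G] [TopologicalSpace X] [CompactSpace X]

set_option linter.unusedSectionVars false in
lemma mdim_of_const_zero (T : G → X → X) (d0 : X → X → ℝ) (h : ∀ x y : X, d0 x y = 0)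
    (Fs : ℕ → Finset G) :
    mdimMUpper T d0 Fs (Set.univ : Set X) = 0 ∧ mdimMLower T d0 Fs (Set.univ : Set X) = 0 := by
  classical
  have hdyn : ∀ (F : Finset G) (x y : X), dynDist T d0 F x y = 0 := by
    intro F x y
    unfold dynDist
    split
    · next hF =>
        rw [Finset.sup'_congr hF rfl (fun g _ => h (T g x) (T g y)), Finset.sup'_const]
    · rfl
  have hlog : ∀ (F : Finset G) (ε : ℝ),
      Real.log (spanNum T d0 F ε (Set.univ : Set X) : ℝ) = 0 := by
    intro F ε
    rcases isEmpty_or_nonempty X with hX | hX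
    · have : spanNum T d0 F ε (Set.univ : Set X) = 0 :=
        Nat.sInf_eq_zero.2 (Or.inl ⟨∅, ⟨by simp, fun x _ => (IsEmpty.false x).elim⟩, rfl⟩)
      rw [this]; simp
    · obtain ⟨x₀⟩ := hX
      rcases le_or_gt 0 ε with hε | hε
      · have h1 : (1:ℕ) ∈ {n : ℕ | ∃ K : Finset X,
            IsSpanningSet T d0 F ε (Set.univ : Set X) K ∧ K.card = n} :=
          ⟨{x₀}, ⟨Set.subset_univ _, fun x _ =>
            ⟨x₀, Finset.mem_singleton_self _, by rw [hdyn]; exact hε⟩⟩,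
            Finset.card_singleton _⟩
        have h0 : (0:ℕ) ∉ {n : ℕ | ∃ K : Finset X,
            IsSpanningSet T d0 F ε (Set.univ : Set X) K ∧ K.card = n} := by
          rintro ⟨K, hK, hc⟩
          rw [Finset.card_eq_zero] at hc
          subst hc
          obtain ⟨y, hy, -⟩ := hK.2 x₀ (Set.mem_univ x₀)
          simp at hy
        have : spanNum T d0 F ε (Set.univ : Set X) = 1 := by
          refine le_antisymm (Nat.sInf_le h1) ?_
          refine Nat.one_le_iff_ne_zero.2 fun hz => h0 ?_
          rw [← hz]
          exact Nat.sInf_mem ⟨1, h1⟩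
        rw [this]; simp
      · have hemp : {n : ℕ | ∃ K : Finset X,
            IsSpanningSet T d0 F ε (Set.univ : Set X) K ∧ K.card = n} = ∅ := by
          refine Set.eq_empty_iff_forall_notMem.2 fun n => ?_
          rintro ⟨K, hK, -⟩
          obtain ⟨y, -, hd⟩ := hK.2 x₀ (Set.mem_univ x₀)
          rw [hdyn] at hd
          exact absurd hd (not_le.2 hε)
        have : spanNum T d0 F ε (Set.univ : Set X) = 0 := by
          unfold spanNum
          rw [hemp, Nat.sInf_empty]
        rw [this]; simp
  have hfun : (fun ε : ℝ =>
      (limsup (fun n => ENNReal.ofReal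
          (Real.log (spanNum T d0 (Fs n) ε (Set.univ : Set X) : ℝ) / ((Fs n).card : ℝ)))
        atTop) / ENNReal.ofReal |Real.log ε|) = fun _ => (0:ℝ≥0∞) := by
    funext ε
    have : (fun n => ENNReal.ofReal
        (Real.log (spanNum T d0 (Fs n) ε (Set.univ : Set X) : ℝ) / ((Fs n).card : ℝ)))
        = fun _ : ℕ => (0:ℝ≥0∞) := by
      funext n
      rw [hlog, zero_div, ENNReal.ofReal_zero]
    rw [this, limsup_const, ENNReal.zero_div]
  constructor
  · show limsup _ (𝓝[>] (0:ℝ)) = 0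
    rw [hfun, limsup_const]
  · show liminf _ (𝓝[>] (0:ℝ)) = 0
    rw [hfun, liminf_const]

end ZeroAux

section NumAux

lemma numeric_est {k δ ε₁ M m fv θ₁ θ₂ : ℝ}
    (hθ₁ : θ₁ = (k - 2*δ) / (k + δ)) (hθ₂ : θ₂ = (k - δ) / (k + 2*δ))
    (hk : 0 < k) (hδ : 0 < δ) (hδ1 : δ ≤ k/6)
    (hδ2 : δ * (12 * (M + 1)) ≤ ε₁ * k)
    (hM : 0 ≤ M) (hm : 0 ≤ m) (hmM : m ≤ M)
    (hε₁ : 0 < ε₁) (hε₁1 : ε₁ ≤ 1)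
    (hup : fv ≤ m / θ₁) (hlo : m * θ₂ ≤ fv) :
    |fv - m| < ε₁ := by
  have hk2δ : 0 < k - 2*δ := by linarith
  have hkδ : 0 < k + δ := by linarith
  have hk2δ' : 0 < k + 2*δ := by linarith
  have hδm : δ * m ≤ δ * M := mul_le_mul_of_nonneg_left hmM hδ.le
  have hδM : 0 ≤ δ * M := mul_nonneg hδ.le hM
  have hδε : δ * ε₁ ≤ δ := by nlinarith
  have hδε0 : 0 ≤ δ * ε₁ := mul_nonneg hδ.le hε₁.le
  have hεk : 0 < ε₁ * k := mul_pos hε₁ hk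
  rw [abs_sub_lt_iff]
  constructor
  · have h1 : m / θ₁ = m * (k + δ) / (k - 2*δ) := by
      rw [hθ₁, div_div_eq_mul_div]
    have h2 : m * (k + δ) / (k - 2*δ) < m + ε₁ := by
      rw [div_lt_iff₀ hk2δ]
      nlinarith
    linarith [hup.trans_eq h1]
  · have h2 : m - ε₁ < m * θ₂ := by
      rw [hθ₂, show m * ((k - δ) / (k + 2*δ)) = m * (k - δ) / (k + 2*δ) from
        (mul_div_assoc _ _ _).symm, lt_div_iff₀ hk2δ']
      nlinarith
    linarith

end NumAux

set_option linter.unusedSectionVars false in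
lemma mdimMLower_le_mdimMUpper {G X : Type*} (T : G → X → X) (d' : X → X → ℝ)
    (Fs : ℕ → Finset G) (E : Set X) :
    mdimMLower T d' Fs E ≤ mdimMUpper T d' Fs E :=
  liminf_le_limsup

/-- if `mdim_M(X,G,d) < ∞` and `ρ = diam_d X < 1`, then
`ζ ↦ overline{mdim}_M(X,G,ζ∘d)` and `ζ ↦ underline{mdim}_M(X,G,ζ∘d)` are continuous
on `(A⁺[0,ρ], T)`. -/
theorem mdimM_continuous_on_Aplus {G X : Type*} [Group G] [Countable G]
    [TopologicalSpace X] [CompactSpace X]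
    (T : G → X → X) (hT : IsContAction T)
    (d : X → X → ℝ) (hd : IsMetricOn d) (hc : InducesTopology d)
    (Fs : ℕ → Finset G) (hFol : IsFolner Fs)
    (ρ : ℝ) (hρ : ρ = setDiam d (Set.univ : Set X)) (hρ1 : ρ < 1)
    (hfin : mdimMUpper T d Fs (Set.univ : Set X) ≠ ⊤) :
    @Continuous {f : ℝ → ℝ // MemAplus ρ f} ℝ (Ttop ρ) inferInstance
      (fun ζ => (mdimMUpper T (fun x y => ζ.1 (d x y)) Fs (Set.univ : Set X)).toReal) ∧
    @Continuous {f : ℝ → ℝ // MemAplus ρ f} ℝ (Ttop ρ) inferInstance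
      (fun ζ => (mdimMLower T (fun x y => ζ.1 (d x y)) Fs (Set.univ : Set X)).toReal) := by
  classical
  obtain ⟨hT1, hT2, hT3⟩ := hT
  obtain ⟨hd0, hdeq, hdsym, hdtri⟩ := hd
  have hFne : ∀ n, (Fs n).Nonempty := hFol.1
  have hsetdiam : setDiam d (Set.univ : Set X)
      = sSup {r : ℝ | ∃ x ∈ (Set.univ : Set X), ∃ y ∈ Set.univ, r = d x y} := rfl
  by_cases htriv : ∀ x y : X, d x y = 0
  · -- degenerate case: the induced metric is identically zero and both maps are constant
    have hρ0 : ρ = 0 := by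
      rw [hρ, hsetdiam]
      rcases isEmpty_or_nonempty X with hX | hX
      · have he : {r : ℝ | ∃ x ∈ (Set.univ : Set X), ∃ y ∈ Set.univ, r = d x y} = ∅ := by
          refine Set.eq_empty_iff_forall_notMem.2 fun r hr => ?_
          obtain ⟨x, -⟩ := hr
          exact (IsEmpty.false x).elim
        rw [he, Real.sSup_empty]
      · obtain ⟨x₀⟩ := hX
        have he : {r : ℝ | ∃ x ∈ (Set.univ : Set X), ∃ y ∈ Set.univ, r = d x y} = {0} := by
          ext r
          simp only [Set.mem_setOf_eq, Set.mem_singleton_iff]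
          constructor
          · rintro ⟨x, -, y, -, rfl⟩
            exact htriv x y
          · rintro rfl
            exact ⟨x₀, Set.mem_univ _, x₀, Set.mem_univ _, (htriv x₀ x₀).symm⟩
        rw [he, csSup_singleton]
    have hzero : ∀ ζ : {f : ℝ → ℝ // MemAplus ρ f}, ∀ x y : X, ζ.1 (d x y) = 0 := by
      intro ζ x y
      rw [htriv x y]
      exact (ζ.2.1.2.2.2.2 0 ⟨le_refl _, by rw [hρ0]⟩).2 rfl
    constructor
    · have he : (fun ζ : {f : ℝ → ℝ // MemAplus ρ f} =>
          (mdimMUpper T (fun x y => ζ.1 (d x y)) Fs (Set.univ : Set X)).toReal)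
          = fun _ => (0:ℝ) := by
        funext ζ
        rw [(mdim_of_const_zero T _ (hzero ζ) Fs).1, ENNReal.toReal_zero]
      rw [he]
      exact @continuous_const _ _ (Ttop ρ) _ _
    · have he : (fun ζ : {f : ℝ → ℝ // MemAplus ρ f} =>
          (mdimMLower T (fun x y => ζ.1 (d x y)) Fs (Set.univ : Set X)).toReal)
          = fun _ => (0:ℝ) := by
        funext ζ
        rw [(mdim_of_const_zero T _ (hzero ζ) Fs).2, ENNReal.toReal_zero]
      rw [he]
      exact @continuous_const _ _ (Ttop ρ) _ _
  · -- main case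
    push_neg at htriv
    obtain ⟨a₀, b₀, hab⟩ := htriv
    have hXne : Nonempty X := ⟨a₀⟩
    have hdc : ∀ c : X, Continuous fun z => d c z := by
      intro c
      rw [continuous_iff_continuousAt]
      intro x
      rw [ContinuousAt, Metric.tendsto_nhds]
      intro ε hε
      have hball : {y : X | d x y < ε} ∈ 𝓝 x := (hc x _).2 ⟨ε, hε, subset_rfl⟩
      filter_upwards [hball] with y hy
      rw [Real.dist_eq, abs_lt]
      have h1 : d c y ≤ d c x + d x y := hdtri c x y
      have h2 : d c x ≤ d c y + d y x := hdtri c y x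
      have h3 : d y x = d x y := hdsym y x
      constructor <;> linarith
    obtain ⟨z, -, hz⟩ := isCompact_univ.exists_isMaxOn Set.univ_nonempty (hdc a₀).continuousOn
    have hbdd : BddAbove {r : ℝ | ∃ x ∈ (Set.univ : Set X), ∃ y ∈ Set.univ, r = d x y} := by
      refine ⟨d a₀ z + d a₀ z, ?_⟩
      rintro r ⟨x, -, y, -, rfl⟩
      have h1 : d x y ≤ d x a₀ + d a₀ y := hdtri x a₀ y
      have h2 : d x a₀ = d a₀ x := hdsym x a₀
      have h3 : d a₀ x ≤ d a₀ z := hz (Set.mem_univ x)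
      have h4 : d a₀ y ≤ d a₀ z := hz (Set.mem_univ y)
      linarith
    have hdle : ∀ x y : X, d x y ≤ ρ := by
      intro x y
      rw [hρ, hsetdiam]
      exact le_csSup hbdd ⟨x, Set.mem_univ _, y, Set.mem_univ _, rfl⟩
    have hρpos : 0 < ρ :=
      lt_of_lt_of_le ((hd0 a₀ b₀).lt_of_ne (Ne.symm hab)) (hdle a₀ b₀)
    have hzmem : ∀ x y : X, d x y ∈ Set.Icc (0:ℝ) ρ := fun x y => ⟨hd0 x y, hdle x y⟩
    have hz00 : ∀ ζ : {f : ℝ → ℝ // MemAplus ρ f}, ζ.1 0 = 0 := fun ζ =>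
      (ζ.2.1.2.2.2.2 0 ⟨le_refl _, hρpos.le⟩).2 rfl
    have hζposIoc : ∀ (ζ : {f : ℝ → ℝ // MemAplus ρ f}) (t : ℝ), t ∈ Set.Ioc (0:ℝ) ρ →
        0 < ζ.1 t := by
      intro ζ t ht
      refine (ζ.2.1.2.2.1 t ⟨ht.1.le, ht.2⟩).lt_of_ne fun h => ?_
      exact ht.1.ne' ((ζ.2.1.2.2.2.2 t ⟨ht.1.le, ht.2⟩).1 h.symm)
    have hmprop : ∀ ζ : {f : ℝ → ℝ // MemAplus ρ f},
        (∀ c : X, Continuous fun z => ζ.1 (d c z)) ∧ (∀ x : X, ζ.1 (d x x) = 0) ∧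
          ∀ x y : X, ζ.1 (d x y) = ζ.1 (d y x) := by
      intro ζ
      refine ⟨fun c => ζ.2.1.1.comp_continuous (hdc c) fun z => hzmem c z,
        fun x => ?_, fun x y => by rw [hdsym x y]⟩
      rw [(hdeq x x).2 rfl]
      exact hz00 ζ
    -- the key local estimate
    have key : ∀ ζ₀ : {f : ℝ → ℝ // MemAplus ρ f}, ∀ ε : ℝ, 0 < ε →
        ∃ δ : ℝ, 0 < δ ∧ ∀ ϑ : {f : ℝ → ℝ // MemAplus ρ f}, ϑ ∈ tildeB ρ ζ₀.1 δ →
          |(mdimMUpper T (fun x y => ϑ.1 (d x y)) Fs (Set.univ : Set X)).toReal -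
            (mdimMUpper T (fun x y => ζ₀.1 (d x y)) Fs (Set.univ : Set X)).toReal| < ε ∧
          |(mdimMLower T (fun x y => ϑ.1 (d x y)) Fs (Set.univ : Set X)).toReal -
            (mdimMLower T (fun x y => ζ₀.1 (d x y)) Fs (Set.univ : Set X)).toReal| < ε := by
      intro ζ₀ ε hε
      set ε₁ := min ε 1 with hε₁def
      have hε₁pos : 0 < ε₁ := lt_min hε one_pos
      have hε₁le : ε₁ ≤ 1 := min_le_right _ _
      set k := km ζ₀.1 with hkdef
      have hkpos : 0 < k := ζ₀.2.2.2
      -- finiteness of the ζ₀-dimensions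
      have hC : ∀ᶠ ε' in 𝓝[>] (0:ℝ), ∀ x y : X, d x y ≤ ε' → ζ₀.1 (d x y) ≤ ε' ^ (k/2) := by
        obtain ⟨t₁, ht₁, hsub⟩ := mem_nhdsGT_iff_exists_Ioc_subset.1
          (zeta_asymp ζ₀.2 hρpos (show (0:ℝ) < k/2 by positivity))
        have hmem : Set.Ioc (0:ℝ) t₁ ∈ 𝓝[>] (0:ℝ) :=
          mem_nhdsGT_iff_exists_Ioc_subset.2 ⟨t₁, ht₁, subset_rfl⟩
        filter_upwards [hmem, self_mem_nhdsWithin] with ε' hε' (hε'0 : (0:ℝ) < ε')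
        intro x y hxy
        rcases eq_or_lt_of_le (hd0 x y) with h0 | ht0
        · rw [← h0, hz00 ζ₀]
          exact (Real.rpow_pos_of_pos hε'0 _).le
        · have hts : d x y ∈ Set.Ioc (0:ℝ) t₁ := ⟨ht0, hxy.trans hε'.2⟩
          have hb := (hsub hts).2
          refine hb.trans ?_
          have : d x y ^ (k - k/2) ≤ ε' ^ (k - k/2) :=
            Real.rpow_le_rpow ht0.le hxy (by linarith)
          rw [show km ζ₀.1 - k/2 = k/2 by rw [← hkdef]; ring]
          simpa [show k - k/2 = k/2 by ring] using this
      have hcompC := mdim_comp_le T hT3 (fun x y => ζ₀.1 (d x y)) d hdc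
        (fun x => (hdeq x x).2 rfl) hdsym Fs hFne (show (0:ℝ) < k/2 by positivity) hC
      have hMufin : mdimMUpper T (fun x y => ζ₀.1 (d x y)) Fs (Set.univ : Set X) ≠ ⊤ :=
        (lt_of_le_of_lt hcompC.1
          (ENNReal.div_lt_top hfin (ENNReal.ofReal_pos.2 (show (0:ℝ) < k/2 by positivity)).ne')).ne
      have hMlle := mdimMLower_le_mdimMUpper T (fun x y => ζ₀.1 (d x y)) Fs (Set.univ : Set X)
      have hMlfin : mdimMLower T (fun x y => ζ₀.1 (d x y)) Fs (Set.univ : Set X) ≠ ⊤ :=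
        (lt_of_le_of_lt hMlle hMufin.lt_top).ne
      set mU := (mdimMUpper T (fun x y => ζ₀.1 (d x y)) Fs (Set.univ : Set X)).toReal with hmUdef
      set mL := (mdimMLower T (fun x y => ζ₀.1 (d x y)) Fs (Set.univ : Set X)).toReal with hmLdef
      have hmU0 : 0 ≤ mU := ENNReal.toReal_nonneg
      have hmL0 : 0 ≤ mL := ENNReal.toReal_nonneg
      have hmLU : mL ≤ mU := ENNReal.toReal_mono hMufin hMlle
      -- choice of δ
      set δ := min (k/6) (ε₁ * k / (12 * (mU + 1))) with hδdef
      have hδpos : 0 < δ := lt_min (by positivity) (by positivity)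
      have hδ1 : δ ≤ k/6 := min_le_left _ _
      have hδ2 : δ * (12 * (mU + 1)) ≤ ε₁ * k := by
        have h := min_le_right (k/6) (ε₁ * k / (12 * (mU + 1)))
        rw [← hδdef] at h
        have hpos12 : (0:ℝ) < 12 * (mU + 1) := by positivity
        calc δ * (12 * (mU + 1))
            ≤ (ε₁ * k / (12 * (mU + 1))) * (12 * (mU + 1)) :=
              mul_le_mul_of_nonneg_right h hpos12.le
          _ = ε₁ * k := div_mul_cancel₀ _ hpos12.ne'
      refine ⟨δ, hδpos, fun ϑ hB => ?_⟩
      -- quantitative data for ζ₀ at scale δ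
      obtain ⟨t₁, ht₁, hsub⟩ := mem_nhdsGT_iff_exists_Ioc_subset.1
        (zeta_asymp ζ₀.2 hρpos hδpos)
      set t₀ := min t₁ ρ with ht₀def
      have ht₀pos : 0 < t₀ := lt_min ht₁ hρpos
      have ht₀ρ : t₀ ≤ ρ := min_le_right _ _
      have hP : ∀ t, t ∈ Set.Ioc (0:ℝ) t₀ → t ^ (k + δ) ≤ ζ₀.1 t ∧ ζ₀.1 t ≤ t ^ (k - δ) :=
        fun t ht => hsub ⟨ht.1, ht.2.trans (min_le_left _ _)⟩
      have hζt₀pos : 0 < ζ₀.1 t₀ :=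
        lt_of_lt_of_le (Real.rpow_pos_of_pos ht₀pos _) (hP t₀ ⟨ht₀pos, le_refl _⟩).1
      -- sandwich bounds from `tildeB` membership
      have hsand : ∀ t, t ∈ Set.Ioc (0:ℝ) ρ →
          ζ₀.1 t * t ^ δ < ϑ.1 t ∧ ϑ.1 t < ζ₀.1 t / t ^ δ := by
        intro t ht
        obtain ⟨hl, hr⟩ := hB t ht
        have htδ : 0 < t ^ δ := Real.rpow_pos_of_pos ht.1 δ
        constructor
        · nlinarith [hl]
        · have heq : ζ₀.1 t + ζ₀.1 t * (1 - t ^ δ) / t ^ δ = ζ₀.1 t / t ^ δ := by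
            field_simp
            ring
          linarith [hr]
      set θ₁ := (k - 2*δ) / (k + δ) with hθ₁
      set θ₂ := (k - δ) / (k + 2*δ) with hθ₂
      have hθ₁pos : 0 < θ₁ := div_pos (by linarith) (by linarith)
      have hθ₂pos : 0 < θ₂ := div_pos (by linarith) (by linarith)
      -- claim A
      have hA : ∀ᶠ ε' in 𝓝[>] (0:ℝ), ∀ x y : X,
          ζ₀.1 (d x y) ≤ ε' → ϑ.1 (d x y) ≤ ε' ^ θ₁ := by
        have hmem : Set.Ioo (0:ℝ) (ζ₀.1 t₀) ∈ 𝓝[>] (0:ℝ) :=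
          Ioo_mem_nhdsGT_of_mem ⟨le_refl _, hζt₀pos⟩
        filter_upwards [hmem] with ε' hε'
        intro x y hxy
        rcases eq_or_lt_of_le (hd0 x y) with h0 | ht0
        · rw [← h0, hz00 ϑ]
          exact (Real.rpow_pos_of_pos hε'.1 _).le
        · have htρ : d x y ≤ ρ := hdle x y
          have htt₀ : d x y ≤ t₀ := by
            by_contra hgt
            push_neg at hgt
            have hmono : ζ₀.1 t₀ ≤ ζ₀.1 (d x y) :=
              ζ₀.2.1.2.1 ⟨ht₀pos.le, ht₀ρ⟩ ⟨ht0.le, htρ⟩ hgt.le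
            linarith [hε'.2]
          obtain ⟨hlow, hupp⟩ := hP (d x y) ⟨ht0, htt₀⟩
          have hkδpos : (0:ℝ) < k + δ := by linarith
          have htE : d x y ≤ ε' ^ (1/(k+δ)) := by
            have h1 : d x y ^ (k+δ) ≤ ε' := hlow.trans hxy
            have h2 : (d x y ^ (k+δ)) ^ (1/(k+δ)) ≤ ε' ^ (1/(k+δ)) :=
              Real.rpow_le_rpow (Real.rpow_pos_of_pos ht0 _).le h1 (by positivity)
            rwa [← Real.rpow_mul ht0.le, mul_one_div_cancel hkδpos.ne', Real.rpow_one] at h2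
          have hub2 : ϑ.1 (d x y) ≤ d x y ^ (k - 2*δ) := by
            have h2 := (hsand (d x y) ⟨ht0, htρ⟩).2
            have htδ : 0 < d x y ^ δ := Real.rpow_pos_of_pos ht0 δ
            have h3 : ζ₀.1 (d x y) / d x y ^ δ ≤ d x y ^ (k-δ) / d x y ^ δ :=
              (div_le_div_iff_of_pos_right htδ).2 hupp
            have h4 : d x y ^ (k-δ) / d x y ^ δ = d x y ^ (k - 2*δ) := by
              rw [← Real.rpow_sub ht0]
              ring_nf
            exact (h2.trans_le (h3.trans_eq h4)).le
          calc ϑ.1 (d x y) ≤ d x y ^ (k - 2*δ) := hub2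
            _ ≤ (ε' ^ (1/(k+δ))) ^ (k - 2*δ) :=
                Real.rpow_le_rpow ht0.le htE (by linarith)
            _ = ε' ^ θ₁ := by
                rw [← Real.rpow_mul hε'.1.le, hθ₁]
                congr 1
                field_simp
      -- claim B
      have hBc : ∀ᶠ ε' in 𝓝[>] (0:ℝ), ∀ x y : X,
          ϑ.1 (d x y) ≤ ε' → ζ₀.1 (d x y) ≤ ε' ^ θ₂ := by
        have hmemB : Set.Ioo (0:ℝ) (ζ₀.1 t₀ * t₀ ^ δ) ∈ 𝓝[>] (0:ℝ) :=
          Ioo_mem_nhdsGT_of_mem ⟨le_refl _,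
            mul_pos hζt₀pos (Real.rpow_pos_of_pos ht₀pos δ)⟩
        filter_upwards [hmemB] with ε' hε'
        intro x y hxy
        rcases eq_or_lt_of_le (hd0 x y) with h0 | ht0
        · rw [← h0, hz00 ζ₀]
          exact (Real.rpow_pos_of_pos hε'.1 _).le
        · have htρ : d x y ≤ ρ := hdle x y
          have hsd := hsand (d x y) ⟨ht0, htρ⟩
          have htt₀ : d x y ≤ t₀ := by
            by_contra hgt
            push_neg at hgt
            have h1 : ζ₀.1 t₀ ≤ ζ₀.1 (d x y) :=
              ζ₀.2.1.2.1 ⟨ht₀pos.le, ht₀ρ⟩ ⟨ht0.le, htρ⟩ hgt.le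
            have h2 : t₀ ^ δ ≤ d x y ^ δ := Real.rpow_le_rpow ht₀pos.le hgt.le hδpos.le
            have h3 : ζ₀.1 t₀ * t₀ ^ δ ≤ ζ₀.1 (d x y) * d x y ^ δ :=
              mul_le_mul h1 h2 (Real.rpow_pos_of_pos ht₀pos δ).le
                (hζposIoc ζ₀ (d x y) ⟨ht0, htρ⟩).le
            linarith [hsd.1, hε'.2]
          obtain ⟨hlow, hupp⟩ := hP (d x y) ⟨ht0, htt₀⟩
          have hk2δpos : (0:ℝ) < k + 2*δ := by linarith
          have hcb : d x y ^ (k + 2*δ) ≤ ε' := by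
            have e : d x y ^ (k + 2*δ) = d x y ^ (k+δ) * d x y ^ δ := by
              rw [← Real.rpow_add ht0]
              ring_nf
            have h5 : d x y ^ (k+δ) * d x y ^ δ ≤ ζ₀.1 (d x y) * d x y ^ δ :=
              mul_le_mul_of_nonneg_right hlow (Real.rpow_pos_of_pos ht0 δ).le
            calc d x y ^ (k+2*δ) = d x y ^ (k+δ) * d x y ^ δ := e
              _ ≤ ζ₀.1 (d x y) * d x y ^ δ := h5
              _ ≤ ε' := hsd.1.le.trans hxy
          have htE : d x y ≤ ε' ^ (1/(k+2*δ)) := by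
            have h2 : (d x y ^ (k+2*δ)) ^ (1/(k+2*δ)) ≤ ε' ^ (1/(k+2*δ)) :=
              Real.rpow_le_rpow (Real.rpow_pos_of_pos ht0 _).le hcb (by positivity)
            rwa [← Real.rpow_mul ht0.le, mul_one_div_cancel hk2δpos.ne', Real.rpow_one] at h2
          calc ζ₀.1 (d x y) ≤ d x y ^ (k - δ) := hupp
            _ ≤ (ε' ^ (1/(k+2*δ))) ^ (k - δ) :=
                Real.rpow_le_rpow ht0.le htE (by linarith)
            _ = ε' ^ θ₂ := by
                rw [← Real.rpow_mul hε'.1.le, hθ₂]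
                congr 1
                field_simp
      -- comparison of dimensions, both directions
      obtain ⟨hcA_u, hcA_l⟩ := mdim_comp_le T hT3 (fun x y => ϑ.1 (d x y))
        (fun x y => ζ₀.1 (d x y)) (hmprop ζ₀).1 (hmprop ζ₀).2.1 (hmprop ζ₀).2.2
        Fs hFne hθ₁pos hA
      obtain ⟨hcB_u, hcB_l⟩ := mdim_comp_le T hT3 (fun x y => ζ₀.1 (d x y))
        (fun x y => ϑ.1 (d x y)) (hmprop ϑ).1 (hmprop ϑ).2.1 (hmprop ϑ).2.2
        Fs hFne hθ₂pos hBc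
      have hc₁0 : ENNReal.ofReal θ₁ ≠ 0 := (ENNReal.ofReal_pos.2 hθ₁pos).ne'
      have hc₂0 : ENNReal.ofReal θ₂ ≠ 0 := (ENNReal.ofReal_pos.2 hθ₂pos).ne'
      have hMuϑfin : mdimMUpper T (fun x y => ϑ.1 (d x y)) Fs (Set.univ : Set X) ≠ ⊤ :=
        (lt_of_le_of_lt hcA_u (ENNReal.div_lt_top hMufin hc₁0)).ne
      have hMlϑfin : mdimMLower T (fun x y => ϑ.1 (d x y)) Fs (Set.univ : Set X) ≠ ⊤ :=
        (lt_of_le_of_lt hcA_l (ENNReal.div_lt_top hMlfin hc₁0)).ne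
      have hupU : (mdimMUpper T (fun x y => ϑ.1 (d x y)) Fs (Set.univ : Set X)).toReal
          ≤ mU / θ₁ := by
        have h6 := ENNReal.toReal_mono (ENNReal.div_lt_top hMufin hc₁0).ne hcA_u
        rwa [ENNReal.toReal_div, ENNReal.toReal_ofReal hθ₁pos.le] at h6
      have hloU : mU * θ₂ ≤ (mdimMUpper T (fun x y => ϑ.1 (d x y)) Fs (Set.univ : Set X)).toReal := by
        have h6 : mdimMUpper T (fun x y => ζ₀.1 (d x y)) Fs (Set.univ : Set X)
            * ENNReal.ofReal θ₂
            ≤ mdimMUpper T (fun x y => ϑ.1 (d x y)) Fs (Set.univ : Set X) :=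
          (ENNReal.le_div_iff_mul_le (Or.inl hc₂0) (Or.inl ENNReal.ofReal_ne_top)).1 hcB_u
        have h7 := ENNReal.toReal_mono hMuϑfin h6
        rwa [ENNReal.toReal_mul, ENNReal.toReal_ofReal hθ₂pos.le] at h7
      have hupL : (mdimMLower T (fun x y => ϑ.1 (d x y)) Fs (Set.univ : Set X)).toReal
          ≤ mL / θ₁ := by
        have h6 := ENNReal.toReal_mono (ENNReal.div_lt_top hMlfin hc₁0).ne hcA_l
        rwa [ENNReal.toReal_div, ENNReal.toReal_ofReal hθ₁pos.le] at h6
      have hloL : mL * θ₂ ≤ (mdimMLower T (fun x y => ϑ.1 (d x y)) Fs (Set.univ : Set X)).toReal := by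
        have h6 : mdimMLower T (fun x y => ζ₀.1 (d x y)) Fs (Set.univ : Set X)
            * ENNReal.ofReal θ₂
            ≤ mdimMLower T (fun x y => ϑ.1 (d x y)) Fs (Set.univ : Set X) :=
          (ENNReal.le_div_iff_mul_le (Or.inl hc₂0) (Or.inl ENNReal.ofReal_ne_top)).1 hcB_l
        have h7 := ENNReal.toReal_mono hMlϑfin h6
        rwa [ENNReal.toReal_mul, ENNReal.toReal_ofReal hθ₂pos.le] at h7
      have hres1 : |(mdimMUpper T (fun x y => ϑ.1 (d x y)) Fs (Set.univ : Set X)).toReal - mU|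
          < ε₁ :=
        numeric_est hθ₁ hθ₂ hkpos hδpos hδ1 hδ2 hmU0 hmU0 (le_refl _) hε₁pos hε₁le hupU hloU
      have hres2 : |(mdimMLower T (fun x y => ϑ.1 (d x y)) Fs (Set.univ : Set X)).toReal - mL|
          < ε₁ :=
        numeric_est hθ₁ hθ₂ hkpos hδpos hδ1 hδ2 hmU0 hmL0 hmLU hε₁pos hε₁le hupL hloL
      exact ⟨lt_of_lt_of_le hres1 (min_le_left _ _), lt_of_lt_of_le hres2 (min_le_left _ _)⟩
    -- from the key estimate to continuity
    have selfmem : ∀ (ζ₀ : {f : ℝ → ℝ // MemAplus ρ f}) (δ : ℝ), 0 < δ →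
        ζ₀ ∈ tildeB ρ ζ₀.1 δ := by
      intro ζ₀ δ hδ x hx
      have hx1 : x ^ δ < 1 := Real.rpow_lt_one hx.1.le (lt_of_le_of_lt hx.2 hρ1) hδ
      have hxp : 0 < x ^ δ := Real.rpow_pos_of_pos hx.1 δ
      have hζp : 0 < ζ₀.1 x := hζposIoc ζ₀ x hx
      constructor
      · rw [sub_self]
        exact mul_neg_of_pos_of_neg hζp (by linarith)
      · rw [sub_self]
        exact div_pos (mul_pos hζp (by linarith)) hxp
    have hcont_of : ∀ f : {f : ℝ → ℝ // MemAplus ρ f} → ℝ,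
        (∀ ζ₀, ∀ ε : ℝ, 0 < ε → ∃ δ : ℝ, 0 < δ ∧
          ∀ ϑ ∈ tildeB ρ ζ₀.1 δ, |f ϑ - f ζ₀| < ε) →
        @Continuous _ _ (Ttop ρ) _ f := by
      intro f hf
      letI : TopologicalSpace {f : ℝ → ℝ // MemAplus ρ f} := Ttop ρ
      rw [continuous_iff_continuousAt]
      intro ζ₀
      rw [ContinuousAt, Metric.tendsto_nhds]
      intro ε hε
      obtain ⟨δ, hδ, hδf⟩ := hf ζ₀ ε hε
      have hopen : IsOpen (tildeB ρ ζ₀.1 δ) :=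
        TopologicalSpace.isOpen_generateFrom_of_mem ⟨ζ₀.1, ζ₀.2, δ, hδ, rfl⟩
      filter_upwards [hopen.mem_nhds (selfmem ζ₀ δ hδ)] with ϑ hϑ
      rw [Real.dist_eq]
      exact hδf ϑ hϑ
    constructor
    · refine hcont_of _ fun ζ₀ ε hε => ?_
      obtain ⟨δ, hδ, h⟩ := key ζ₀ ε hε
      exact ⟨δ, hδ, fun ϑ hϑ => (h ϑ hϑ).1⟩
    · refine hcont_of _ fun ζ₀ ε hε => ?_
      obtain ⟨δ, hδ, h⟩ := key ζ₀ ε hε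
      exact ⟨δ, hδ, fun ϑ hϑ => (h ϑ hϑ).2⟩


end MeanDim19
end
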